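/- arXiv:1505.02086 — 5 statements merged into one kernel-verified Lean document; each statement's English description precedes it below -/
import Mathlib

section
/- Let c > 0 and let G be a finite connected simple graph with at least 2 vertices. Let q = sr(K_G) and let f be a positive eigenvector with K_G f = q f (such f exists and q > 0 by Perron–Frobenius). Let C be a nonempty subset of V(G), h(u) the graph distance from u to C, N_i(u) = {v adjacent to u : h(v) = h(u) + i} and d_i(u) = |N_i(u)| for i ∈ {−1, 0, +1}, and ω(u) = f(u)·q^{h(u)}. Then q^{-1}·Σ_u d_0(u)ω(u) + q^{-2}·Σ_u d_{−1}(u)ω(u) = Σ_u [d_0(u) + d_{−1}(u) + c]·ω(u), where all sums range over u ∈ V(G). -/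
/-- `K_G = D⁻¹ A_G` where `D` is the diagonal matrix with entries `c + d(u,G)`. -/
noncomputable def Kg {V : Type} [Fintype V] [DecidableEq V] (c : ℝ)
    (G : SimpleGraph V) [DecidableRel G.Adj] : Matrix V V ℝ :=
  Matrix.of fun u v => (G.adjMatrix ℝ) u v / (c + (G.degree u : ℝ))

/-- The spectral radius of a real matrix: the largest modulus of a (complex) eigenvalue. -/
noncomputable def sr {V : Type} [Fintype V] [DecidableEq V] (A : Matrix V V ℝ) : ℝ :=
  sSup ((fun z : ℂ => ‖z‖) '' spectrum ℂ (A.map Complex.ofReal))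

/-- the weighted identity `q⁻¹ Σ d₀(u)ω(u) + q⁻² Σ d₋₁(u)ω(u)
= Σ (d₀(u)+d₋₁(u)+c) ω(u)` for a connected graph with at least two vertices,
a Perron eigenvector f (K_G f = q f, f > 0, q = sr(K_G)), a nonempty set C of
vertices, h(u) the graph distance from u to C, and ω(u) = f(u) q^{h(u)}. -/
theorem weighted_perron_identity
    {V : Type} [Fintype V] [DecidableEq V] (c : ℝ) (hc : 0 < c)
    (G : SimpleGraph V) [DecidableRel G.Adj]
    (hconn : G.Connected) (hcard : 2 ≤ Fintype.card V)
    (q : ℝ) (hq : q = sr (Kg c G))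
    (f : V → ℝ) (hf : ∀ v, 0 < f v)
    (heig : (Kg c G).mulVec f = q • f)
    (C : Finset V) (hC : C.Nonempty) :
    let h : V → ℕ := fun u => sInf {d : ℕ | ∃ v ∈ C, G.dist u v = d}
    let ω : V → ℝ := fun u => f u * q ^ (h u)
    let d0 : V → ℕ := fun u => ((G.neighborFinset u).filter (fun v => h v = h u)).card
    let dm : V → ℕ := fun u => ((G.neighborFinset u).filter (fun v => h v + 1 = h u)).card
    q⁻¹ * (∑ u, (d0 u : ℝ) * ω u) + (q ^ 2)⁻¹ * (∑ u, (dm u : ℝ) * ω u)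
      = ∑ u, ((d0 u : ℝ) + (dm u : ℝ) + c) * ω u := by
  intro h ω d0 dm
  classical
  have hdenom : ∀ u : V, (0:ℝ) < c + (G.degree u : ℝ) := fun u => by positivity
  -- pointwise eigen equation
  have heq : ∀ u : V, ∑ v ∈ G.neighborFinset u, f v = q * ((c + (G.degree u : ℝ)) * f u) := by
    intro u
    have h1 := congrFun heig u
    have h3 : ∑ v : V, (G.adjMatrix ℝ) u v * f v = ∑ v ∈ G.neighborFinset u, f v := by
      rw [← SimpleGraph.adjMatrix_mulVec_apply]
      rfl
    have h2 : (Kg c G).mulVec f u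
        = (∑ v ∈ G.neighborFinset u, f v) / (c + (G.degree u : ℝ)) := by
      simp only [Kg, Matrix.mulVec, dotProduct, Matrix.of_apply,
        div_mul_eq_mul_div, ← Finset.sum_div]
      rw [h3]
    rw [h2] at h1
    simp only [Pi.smul_apply, smul_eq_mul] at h1
    rw [div_eq_iff (hdenom u).ne'] at h1
    linear_combination h1
  -- q is positive
  have hq0 : 0 < q := by
    obtain ⟨u⟩ := hconn.nonempty
    have hadj : ∃ x, G.Adj u x := by
      obtain ⟨w, hw⟩ := Fintype.exists_ne_of_one_lt_card (by omega) u
      obtain ⟨p⟩ := hconn.preconnected u w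
      cases p with
      | nil => exact absurd rfl hw.symm
      | cons ha _ => exact ⟨_, ha⟩
    obtain ⟨x, hx⟩ := hadj
    have hne : (G.neighborFinset u).Nonempty :=
      ⟨x, (SimpleGraph.mem_neighborFinset G u x).mpr hx⟩
    have hsum : 0 < ∑ v ∈ G.neighborFinset u, f v :=
      Finset.sum_pos (fun v _ => hf v) hne
    rw [heq u] at hsum
    have hA : 0 < (c + (G.degree u : ℝ)) * f u := mul_pos (hdenom u) (hf u)
    rcases mul_pos_iff.mp hsum with ⟨hq1, _⟩ | ⟨_, hneg⟩
    · exact hq1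
    · linarith
  have hqne : q ≠ 0 := hq0.ne'
  -- distance function facts
  have hmem : ∀ u : V, ∃ w ∈ C, G.dist u w = h u := by
    intro u
    obtain ⟨w, hw⟩ := hC
    exact Nat.sInf_mem (⟨G.dist u w, w, hw, rfl⟩ :
      {d : ℕ | ∃ v ∈ C, G.dist u v = d}.Nonempty)
  have hle : ∀ u w, w ∈ C → h u ≤ G.dist u w := fun u w hw => Nat.sInf_le ⟨w, hw, rfl⟩
  have hlip : ∀ {u v : V}, G.Adj u v → h v ≤ h u + 1 := by
    intro u v huv
    obtain ⟨w, hwC, hwd⟩ := hmem u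
    calc h v ≤ G.dist v w := hle v w hwC
      _ ≤ G.dist v u + G.dist u w := hconn.dist_triangle
      _ = 1 + h u := by
          rw [hwd, SimpleGraph.dist_eq_one_iff_adj.mpr huv.symm]
      _ = h u + 1 := Nat.add_comm _ _
  have htri : ∀ {u v : V}, G.Adj u v → (h v = h u + 1 ∨ h v = h u ∨ h v + 1 = h u) := by
    intro u v huv
    have h1 := hlip huv
    have h2 := hlip huv.symm
    omega
  -- the "up" degree
  set dp : V → ℕ := fun u => ((G.neighborFinset u).filter (fun v => h v = h u + 1)).card
    with hdp
  -- key neighbor-sum identity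
  have key : ∀ v : V, ∑ u ∈ G.neighborFinset v, q ^ (h u + 1)
      = (dp v : ℝ) * q ^ (h v + 2) + (d0 v : ℝ) * q ^ (h v + 1) + (dm v : ℝ) * q ^ (h v) := by
    intro v
    have e1 : ∀ u ∈ G.neighborFinset v, q ^ (h u + 1)
        = (if h u = h v + 1 then (1:ℝ) else 0) * q ^ (h v + 2)
          + (if h u = h v then (1:ℝ) else 0) * q ^ (h v + 1)
          + (if h u + 1 = h v then (1:ℝ) else 0) * q ^ (h v) := by
      intro u hu
      rw [SimpleGraph.mem_neighborFinset] at hu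
      rcases htri hu with h1 | h1 | h1
      · rw [if_pos h1, if_neg (by omega), if_neg (by omega), h1]
        rw [show h v + 1 + 1 = h v + 2 by omega]; ring
      · rw [if_neg (by omega), if_pos h1, if_neg (by omega), h1]; ring
      · rw [if_neg (by omega), if_neg (by omega), if_pos h1, h1]; ring
    rw [Finset.sum_congr rfl e1, Finset.sum_add_distrib, Finset.sum_add_distrib,
      ← Finset.sum_mul, ← Finset.sum_mul, ← Finset.sum_mul]
    simp [Finset.sum_boole]
    rfl
  -- degree decomposition
  have hdeg : ∀ v : V, (G.degree v : ℝ) = (dp v : ℝ) + (d0 v : ℝ) + (dm v : ℝ) := by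
    intro v
    have e1 : ∀ u ∈ G.neighborFinset v, (1:ℝ)
        = (if h u = h v + 1 then (1:ℝ) else 0)
          + (if h u = h v then (1:ℝ) else 0)
          + (if h u + 1 = h v then (1:ℝ) else 0) := by
      intro u hu
      rw [SimpleGraph.mem_neighborFinset] at hu
      rcases htri hu with h1 | h1 | h1
      · rw [if_pos h1, if_neg (by omega), if_neg (by omega)]; ring
      · rw [if_neg (by omega), if_pos h1, if_neg (by omega)]; ring
      · rw [if_neg (by omega), if_neg (by omega), if_pos h1]; ring
    have e2 : (G.degree v : ℝ) = ∑ u ∈ G.neighborFinset v, (1:ℝ) := by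
      rw [Finset.sum_const, nsmul_eq_mul, mul_one, SimpleGraph.card_neighborFinset_eq_degree]
    rw [e2, Finset.sum_congr rfl e1, Finset.sum_add_distrib, Finset.sum_add_distrib,
      Finset.sum_boole, Finset.sum_boole, Finset.sum_boole]
  -- double counting
  have main : ∑ u : V, (q ^ (h u + 1) * ∑ v ∈ G.neighborFinset u, f v)
      = ∑ v : V, (f v * ∑ u ∈ G.neighborFinset v, q ^ (h u + 1)) := by
    have lhs : ∀ u : V, q ^ (h u + 1) * ∑ v ∈ G.neighborFinset u, f v
        = ∑ v : V, (if G.Adj u v then q ^ (h u + 1) * f v else 0) := by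
      intro u
      rw [Finset.mul_sum, SimpleGraph.neighborFinset_eq_filter, Finset.sum_filter]
    have rhs : ∀ v : V, f v * ∑ u ∈ G.neighborFinset v, q ^ (h u + 1)
        = ∑ u : V, (if G.Adj u v then q ^ (h u + 1) * f v else 0) := by
      intro v
      rw [Finset.mul_sum, SimpleGraph.neighborFinset_eq_filter, Finset.sum_filter]
      refine Finset.sum_congr rfl fun u _ => ?_
      by_cases ha : G.Adj u v
      · rw [if_pos ha.symm, if_pos ha]; ring
      · rw [if_neg (fun hh => ha hh.symm), if_neg ha]
    calc ∑ u : V, (q ^ (h u + 1) * ∑ v ∈ G.neighborFinset u, f v)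
        = ∑ u : V, ∑ v : V, (if G.Adj u v then q ^ (h u + 1) * f v else 0) :=
          Finset.sum_congr rfl fun u _ => lhs u
      _ = ∑ v : V, ∑ u : V, (if G.Adj u v then q ^ (h u + 1) * f v else 0) :=
          Finset.sum_comm
      _ = ∑ v : V, (f v * ∑ u ∈ G.neighborFinset v, q ^ (h u + 1)) :=
          Finset.sum_congr rfl fun v _ => (rhs v).symm
  -- turn both sides of `main` into sums of ω-terms
  have E2 : ∑ u : V, q ^ 2 * ((c + (G.degree u : ℝ)) * ω u)
      = ∑ u : V, (q ^ 2 * ((dp u : ℝ) * ω u) + q * ((d0 u : ℝ) * ω u)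
          + (dm u : ℝ) * ω u) := by
    calc ∑ u : V, q ^ 2 * ((c + (G.degree u : ℝ)) * ω u)
        = ∑ u : V, (q ^ (h u + 1) * ∑ v ∈ G.neighborFinset u, f v) := by
          refine Finset.sum_congr rfl fun u _ => ?_
          rw [heq u]
          show q ^ 2 * ((c + (G.degree u : ℝ)) * (f u * q ^ (h u))) = _
          ring
      _ = ∑ v : V, (f v * ∑ u ∈ G.neighborFinset v, q ^ (h u + 1)) := main
      _ = ∑ u : V, (q ^ 2 * ((dp u : ℝ) * ω u) + q * ((d0 u : ℝ) * ω u)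
          + (dm u : ℝ) * ω u) := by
          refine Finset.sum_congr rfl fun v _ => ?_
          rw [key v]
          show f v * _ = q ^ 2 * ((dp v : ℝ) * (f v * q ^ (h v)))
            + q * ((d0 v : ℝ) * (f v * q ^ (h v))) + (dm v : ℝ) * (f v * q ^ (h v))
          ring
  have E4 : ∑ u : V, (q ^ 2 * (((d0 u : ℝ) + (dm u : ℝ) + c) * ω u)
      - q * ((d0 u : ℝ) * ω u) - (dm u : ℝ) * ω u) = 0 := by
    have E3 : ∑ u : V, (q ^ 2 * ((c + (G.degree u : ℝ)) * ω u)
        - (q ^ 2 * ((dp u : ℝ) * ω u) + q * ((d0 u : ℝ) * ω u)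
          + (dm u : ℝ) * ω u)) = 0 := by
      rw [Finset.sum_sub_distrib, E2, sub_self]
    rw [← E3]
    refine Finset.sum_congr rfl fun u _ => ?_
    rw [hdeg u]; ring
  rw [Finset.sum_sub_distrib, Finset.sum_sub_distrib] at E4
  rw [← Finset.mul_sum Finset.univ (fun x => ((d0 x : ℝ) + (dm x : ℝ) + c) * ω x) (q ^ 2),
    ← Finset.mul_sum Finset.univ (fun x => (d0 x : ℝ) * ω x) q] at E4
  have hq2 : q ^ 2 ≠ 0 := pow_ne_zero 2 hqne
  field_simp
  linear_combination (-1) * E4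
end

section
/- Let c > 0 and let G be a finite tree (a connected acyclic simple graph). Then sr(K_G) < 1/√(1+c). -/
open SimpleGraph Finset

lemma tree_parent_dichotomy {V : Type} [DecidableEq V] {G : SimpleGraph V} (hG : G.IsTree)
    (r : V) :
    ∃ p : V → V, ∀ u v, G.Adj u v → (u ≠ r ∧ p u = v) ∨ (v ≠ r ∧ p v = u) := by
  choose f hf hf' using (hG.existsUnique_path · r)
  refine ⟨fun u => (f u).getVert 1, ?_⟩
  intro u v huv
  by_cases hu : u ∈ (f v).support
  · right
    have htu : (f v).takeUntil u hu = Walk.cons huv.symm Walk.nil :=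
      (hG.existsUnique_path v u).unique ((hf v).takeUntil hu)
        (Walk.IsPath.nil.cons (by simpa using huv.ne'))
    have hfv : f v = Walk.cons huv.symm ((f v).dropUntil u hu) := by
      conv_lhs => rw [← (f v).take_spec hu]
      rw [htu]
      simp
    constructor
    · rintro rfl
      have hnil : f v = Walk.nil := SimpleGraph.Walk.isPath_iff_eq_nil.mp (hf v)
      have hlen := congrArg Walk.length hfv
      have h0 : (f v).length = 0 := by rw [hnil]; rfl
      simp only [Walk.length_cons, h0] at hlen
      omega
    · show (f v).getVert 1 = u
      rw [hfv]
      simp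
  · left
    have hpath : (Walk.cons huv (f v)).IsPath := (hf v).cons hu
    have heq : Walk.cons huv (f v) = f u := hf' u _ hpath
    constructor
    · rintro rfl
      have hnil : f u = Walk.nil := SimpleGraph.Walk.isPath_iff_eq_nil.mp (hf u)
      have hlen := congrArg Walk.length heq
      have h0 : (f u).length = 0 := by rw [hnil]; rfl
      simp only [Walk.length_cons, h0] at hlen
      omega
    · show (f u).getVert 1 = v
      rw [← heq]
      simp

lemma tree_sum_min_le {V : Type} [Fintype V] [DecidableEq V] {G : SimpleGraph V}
    [DecidableRel G.Adj] (hG : G.IsTree) (r : V) (b : V → ℝ) (hb : ∀ u, 0 ≤ b u) :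
    ∑ u, ∑ v, (if G.Adj u v then min (b u) (b v) else 0)
      ≤ 2 * ∑ u ∈ Finset.univ.erase r, b u := by
  obtain ⟨p, hp⟩ := tree_parent_dichotomy hG r
  have inner : ∀ q : V → V, ∀ u : V,
      (∑ v, if u ≠ r ∧ q u = v then b u else 0) = if u ≠ r then b u else 0 := by
    intro q u
    by_cases hu : u = r
    · simp [hu]
    · simp only [hu, ne_eq, not_false_eq_true, true_and]
      rw [Finset.sum_ite_eq univ (q u) (fun _ => b u)]
      simp
  have collect : ∀ q : V → V,
      (∑ u, ∑ v, if u ≠ r ∧ q u = v then b u else 0) = ∑ u ∈ Finset.univ.erase r, b u := by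
    intro q
    rw [Finset.sum_congr rfl (fun u _ => inner q u), ← Finset.sum_filter,
      Finset.filter_ne' univ r]
  calc ∑ u, ∑ v, (if G.Adj u v then min (b u) (b v) else 0)
      ≤ ∑ u, ∑ v, ((if u ≠ r ∧ p u = v then b u else 0)
          + (if v ≠ r ∧ p v = u then b v else 0)) := by
        refine Finset.sum_le_sum fun u _ => Finset.sum_le_sum fun v _ => ?_
        have h1 : (0:ℝ) ≤ if u ≠ r ∧ p u = v then b u else 0 := by
          split_ifs; exacts [hb u, le_refl 0]
        have h2 : (0:ℝ) ≤ if v ≠ r ∧ p v = u then b v else 0 := by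
          split_ifs; exacts [hb v, le_refl 0]
        by_cases hadj : G.Adj u v
        · rcases hp u v hadj with ⟨h3, h4⟩ | ⟨h3, h4⟩
          · rw [if_pos hadj, if_pos (⟨h3, h4⟩ : u ≠ r ∧ p u = v)]
            have := min_le_left (b u) (b v)
            linarith
          · rw [if_pos hadj, if_pos (⟨h3, h4⟩ : v ≠ r ∧ p v = u)]
            have := min_le_right (b u) (b v)
            linarith
        · rw [if_neg hadj]
          linarith
    _ = (∑ u, ∑ v, if u ≠ r ∧ p u = v then b u else 0)
        + (∑ u, ∑ v, if v ≠ r ∧ p v = u then b v else 0) := by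
        rw [← Finset.sum_add_distrib]
        exact Finset.sum_congr rfl fun u _ => Finset.sum_add_distrib
    _ = 2 * ∑ u ∈ Finset.univ.erase r, b u := by
        rw [collect p, Finset.sum_comm, collect p]
        ring

lemma amgm_min_aux {t c x y : ℝ} (hx : 0 ≤ x) (hy : 0 ≤ y) (ht2 : t ^ 2 = 1 + c) :
    t * (x * y) ≤ (x ^ 2 + y ^ 2) / 2 + (c / 2) * min (x ^ 2) (y ^ 2) := by
  rcases le_total x y with h | h
  · rw [min_eq_left (by nlinarith : x ^ 2 ≤ y ^ 2)]
    have h2 : t ^ 2 * x ^ 2 = (1 + c) * x ^ 2 := by rw [ht2]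
    nlinarith [sq_nonneg (y - t * x)]
  · rw [min_eq_right (by nlinarith : y ^ 2 ≤ x ^ 2)]
    have h2 : t ^ 2 * y ^ 2 = (1 + c) * y ^ 2 := by rw [ht2]
    nlinarith [sq_nonneg (x - t * y)]

lemma row_sum_ite {V : Type} [Fintype V] [DecidableEq V] (G : SimpleGraph V)
    [DecidableRel G.Adj] (u : V) (k : ℝ) :
    (∑ v, if G.Adj u v then k else 0) = (G.degree u : ℝ) * k := by
  rw [Finset.sum_ite, Finset.sum_const_zero, add_zero, Finset.sum_const]
  rw [← neighborFinset_eq_filter, ← SimpleGraph.degree, nsmul_eq_mul]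

/-- for a finite tree G and c > 0, sr(K_G) < 1/√(1+c). -/
theorem tree_spectral_radius_lt
    {V : Type} [Fintype V] [DecidableEq V] (c : ℝ) (hc : 0 < c)
    (G : SimpleGraph V) [DecidableRel G.Adj] (hG : G.IsTree) :
    sr (Kg c G) < 1 / Real.sqrt (1 + c) := by
  have hV : Nonempty V := hG.isConnected.nonempty
  set t := Real.sqrt (1 + c) with htdef
  have h1c : (0:ℝ) < 1 + c := by linarith
  have ht : 0 < t := Real.sqrt_pos.mpr h1c
  have ht2 : t ^ 2 = 1 + c := Real.sq_sqrt h1c.le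
  set n := (Fintype.card V : ℝ) with hndef
  have hn : 1 ≤ n := by
    have := Fintype.card_pos (α := V)
    rw [hndef]
    exact_mod_cast this
  set Q := n * (c + n) with hQdef
  have hQ : 0 < Q := by
    have : (0:ℝ) < c + n := by linarith
    rw [hQdef]; positivity
  set B := (1 - c / Q) / t with hBdef
  have hBlt : B < 1 / t := by
    rw [hBdef]
    rw [div_lt_div_iff_of_pos_right ht]
    have : 0 < c / Q := div_pos hc hQ
    linarith
  have hub : ∀ z ∈ (fun z : ℂ => ‖z‖) '' spectrum ℂ ((Kg c G).map Complex.ofReal), z ≤ B := by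
    rintro z ⟨μ, hμ, rfl⟩
    -- extract an eigenvector
    obtain ⟨x, hx0, hx⟩ : ∃ x : V → ℂ, x ≠ 0 ∧ ((Kg c G).map Complex.ofReal).mulVec x = μ • x := by
      have h1 : ¬ IsUnit (algebraMap ℂ (Matrix V V ℂ) μ - (Kg c G).map Complex.ofReal) :=
        spectrum.mem_iff.mp hμ
      rw [Matrix.isUnit_iff_isUnit_det, isUnit_iff_ne_zero, not_not] at h1
      obtain ⟨x, hx0, hx⟩ := (Matrix.exists_mulVec_eq_zero_iff).mpr h1
      refine ⟨x, hx0, ?_⟩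
      rw [Matrix.sub_mulVec, Algebra.algebraMap_eq_smul_one, Matrix.smul_mulVec,
        Matrix.one_mulVec, sub_eq_zero] at hx
      exact hx.symm
    set a : V → ℝ := fun u => ‖x u‖ with hadef
    have ha : ∀ u, 0 ≤ a u := fun u => norm_nonneg _
    have heig : ∀ u, ∑ v, ((Kg c G u v : ℝ) : ℂ) * x v = μ * x u := by
      intro u
      have := congrFun hx u
      simpa [Matrix.mulVec, dotProduct, Matrix.map_apply] using this
    have hd : ∀ u, (0:ℝ) < c + G.degree u := fun u => by positivity
    have hstep : ∀ u, ‖μ‖ * a u * (c + (G.degree u : ℝ))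
        ≤ ∑ v, (if G.Adj u v then a v else 0) := by
      intro u
      rw [← le_div_iff₀ (hd u)]
      have habs : ‖μ‖ * a u = ‖μ * x u‖ := (norm_mul μ (x u)).symm
      rw [habs, ← heig u, Finset.sum_div]
      refine (norm_sum_le _ _).trans (Finset.sum_le_sum fun v _ => ?_)
      rw [norm_mul, Complex.norm_real, Real.norm_eq_abs]
      have hkg : Kg c G u v = (if G.Adj u v then (1:ℝ) else 0) / (c + (G.degree u : ℝ)) := by
        simp [Kg, Matrix.of_apply]
      rw [hkg]
      split_ifs with hadj
      · rw [abs_of_nonneg (by positivity : (0:ℝ) ≤ 1 / (c + (G.degree u : ℝ)))]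
        rw [div_mul_eq_mul_div, one_mul]
      · simp
    set W := ∑ u, (c + (G.degree u : ℝ)) * a u ^ 2 with hWdef
    set Sm := ∑ u, ∑ v, (if G.Adj u v then a u * a v else 0) with hSmdef
    have hWS : ‖μ‖ * W ≤ Sm := by
      rw [hWdef, hSmdef, Finset.mul_sum]
      refine Finset.sum_le_sum fun u _ => ?_
      calc ‖μ‖ * ((c + (G.degree u : ℝ)) * a u ^ 2)
          = a u * (‖μ‖ * a u * (c + (G.degree u : ℝ))) := by ring
        _ ≤ a u * ∑ v, (if G.Adj u v then a v else 0) :=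
            mul_le_mul_of_nonneg_left (hstep u) (ha u)
        _ = ∑ v, (if G.Adj u v then a u * a v else 0) := by
            rw [Finset.mul_sum]
            exact Finset.sum_congr rfl fun v _ => by rw [mul_ite, mul_zero]
    obtain ⟨r, -, hr⟩ := Finset.exists_max_image Finset.univ a Finset.univ_nonempty
    have hmin := tree_sum_min_le hG r (fun u => a u ^ 2) (fun u => sq_nonneg _)
    have herase : ∑ u ∈ Finset.univ.erase r, a u ^ 2 = (∑ u, a u ^ 2) - a r ^ 2 :=
      Finset.sum_erase_eq_sub (Finset.mem_univ r)
    have hkey : t * Sm ≤ W - c * a r ^ 2 := by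
      have hTle : t * Sm ≤ (∑ u, ∑ v, (if G.Adj u v then (a u ^ 2 + a v ^ 2) / 2 else 0))
          + (c / 2) * (∑ u, ∑ v, (if G.Adj u v then min (a u ^ 2) (a v ^ 2) else 0)) := by
        rw [hSmdef, Finset.mul_sum, Finset.mul_sum, ← Finset.sum_add_distrib]
        refine Finset.sum_le_sum fun u _ => ?_
        rw [Finset.mul_sum, Finset.mul_sum, ← Finset.sum_add_distrib]
        refine Finset.sum_le_sum fun v _ => ?_
        split_ifs with hadj
        · exact amgm_min_aux (ha u) (ha v) ht2
        · simp
      have hG1 : (∑ u, ∑ v, (if G.Adj u v then (a u ^ 2 + a v ^ 2) / 2 else 0))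
          = ∑ u, (G.degree u : ℝ) * a u ^ 2 := by
        have hsplit : ∀ u v : V, (if G.Adj u v then (a u ^ 2 + a v ^ 2) / 2 else 0)
            = (if G.Adj u v then a u ^ 2 / 2 else 0) + (if G.Adj u v then a v ^ 2 / 2 else 0) := by
          intro u v; split_ifs <;> ring
        calc (∑ u, ∑ v, (if G.Adj u v then (a u ^ 2 + a v ^ 2) / 2 else 0))
            = (∑ u, ∑ v, if G.Adj u v then a u ^ 2 / 2 else 0)
              + (∑ u, ∑ v, if G.Adj u v then a v ^ 2 / 2 else 0) := by
              rw [← Finset.sum_add_distrib]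
              refine Finset.sum_congr rfl fun u _ => ?_
              rw [← Finset.sum_add_distrib]
              exact Finset.sum_congr rfl fun v _ => hsplit u v
          _ = (∑ u, (G.degree u : ℝ) * (a u ^ 2 / 2))
              + (∑ v, (G.degree v : ℝ) * (a v ^ 2 / 2)) := by
              congr 1
              · exact Finset.sum_congr rfl fun u _ => row_sum_ite G u _
              · rw [Finset.sum_comm]
                refine Finset.sum_congr rfl fun v _ => ?_
                rw [← row_sum_ite G v (a v ^ 2 / 2)]
                exact Finset.sum_congr rfl fun u _ =>
                  if_congr (adj_comm G u v) rfl rfl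
          _ = ∑ u, (G.degree u : ℝ) * a u ^ 2 := by
              rw [← Finset.sum_add_distrib]
              exact Finset.sum_congr rfl fun u _ => by ring
      have hWsplit : W = c * (∑ u, a u ^ 2) + ∑ u, (G.degree u : ℝ) * a u ^ 2 := by
        rw [hWdef, Finset.mul_sum, ← Finset.sum_add_distrib]
        exact Finset.sum_congr rfl fun u _ => by ring
      have h2 : (c / 2) * (∑ u, ∑ v, (if G.Adj u v then min (a u ^ 2) (a v ^ 2) else 0))
          ≤ (c / 2) * (2 * ((∑ u, a u ^ 2) - a r ^ 2)) := by
        refine mul_le_mul_of_nonneg_left ?_ (by linarith)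
        rw [← herase]
        exact hmin
      calc t * Sm ≤ _ := hTle
        _ ≤ (∑ u, (G.degree u : ℝ) * a u ^ 2) + (c / 2) * (2 * ((∑ u, a u ^ 2) - a r ^ 2)) := by
            rw [hG1]; linarith
        _ = W - c * a r ^ 2 := by rw [hWsplit]; ring
    have hWpos : 0 < W := by
      obtain ⟨u0, hu0⟩ := Function.ne_iff.mp hx0
      have hapos : 0 < a u0 := norm_pos_iff.mpr hu0
      have hterm : 0 < (c + (G.degree u0 : ℝ)) * a u0 ^ 2 :=
        mul_pos (hd u0) (pow_pos hapos 2)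
      refine lt_of_lt_of_le hterm ?_
      rw [hWdef]
      exact Finset.single_le_sum (fun u _ => mul_nonneg (hd u).le (sq_nonneg _))
        (Finset.mem_univ u0)
    have hWle : W ≤ Q * a r ^ 2 := by
      have hle : ∀ u : V, (c + (G.degree u : ℝ)) * a u ^ 2 ≤ (c + n) * a r ^ 2 := by
        intro u
        have hdn : (G.degree u : ℝ) ≤ n := by
          rw [hndef]
          exact_mod_cast (G.degree_lt_card_verts u).le
        have ha2 : a u ^ 2 ≤ a r ^ 2 :=
          pow_le_pow_left₀ (ha u) (hr u (Finset.mem_univ u)) 2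
        have : (0:ℝ) ≤ c + n := by linarith
        exact mul_le_mul (by linarith) ha2 (sq_nonneg _) this
      calc W ≤ ∑ _u : V, (c + n) * a r ^ 2 := by
            rw [hWdef]; exact Finset.sum_le_sum fun u _ => hle u
        _ = n * ((c + n) * a r ^ 2) := by
            rw [Finset.sum_const, Finset.card_univ, nsmul_eq_mul, hndef]
        _ = Q * a r ^ 2 := by rw [hQdef]; ring
    have hchain : t * ‖μ‖ * W ≤ W - c * a r ^ 2 := by
      calc t * ‖μ‖ * W = t * (‖μ‖ * W) := by ring
        _ ≤ t * Sm := mul_le_mul_of_nonneg_left hWS ht.le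
        _ ≤ W - c * a r ^ 2 := hkey
    have hfrac : c / Q * W ≤ c * a r ^ 2 := by
      rw [div_mul_eq_mul_div, div_le_iff₀ hQ]
      calc c * W ≤ c * (Q * a r ^ 2) := mul_le_mul_of_nonneg_left hWle hc.le
        _ = c * a r ^ 2 * Q := by ring
    have hfinal : ‖μ‖ * t ≤ 1 - c / Q := by
      have h5 : (‖μ‖ * t) * W ≤ (1 - c / Q) * W := by
        have e1 : (‖μ‖ * t) * W = t * ‖μ‖ * W := by ring
        have e2 : (1 - c / Q) * W = W - c / Q * W := by ring
        rw [e1, e2]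
        linarith
      exact le_of_mul_le_mul_right h5 hWpos
    rw [hBdef, le_div_iff₀ ht]
    exact hfinal
  unfold sr
  rcases Set.eq_empty_or_nonempty
      ((fun z : ℂ => ‖z‖) '' spectrum ℂ ((Kg c G).map Complex.ofReal)) with hS | hS
  · rw [hS, Real.sSup_empty]
    exact div_pos one_pos ht
  · exact lt_of_le_of_lt (csSup_le hS hub) hBlt
end

section
/- Let c > 0 and let G be a finite connected unicyclic simple graph (a connected graph containing exactly one cycle, equivalently a connected graph with as many edges as vertices). Then sr(K_G) < 1/√(1+c). -/
open SimpleGraph Finset Walk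



lemma eigvec_of_mem_spectrum {V : Type} [Fintype V] [DecidableEq V]
    (M : Matrix V V ℂ) (μ : ℂ) (hμ : μ ∈ spectrum ℂ M) :
    ∃ x : V → ℂ, x ≠ 0 ∧ M.mulVec x = μ • x := by
  rw [← AlgEquiv.spectrum_eq (Matrix.toLinAlgEquiv' : Matrix V V ℂ ≃ₐ[ℂ] _) M] at hμ
  obtain ⟨x, hx⟩ := Module.End.HasEigenvalue.exists_hasEigenvector
    (Module.End.hasEigenvalue_iff_mem_spectrum.mpr hμ)
  refine ⟨x, hx.2, ?_⟩
  have := hx.apply_eq_smul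
  rwa [Matrix.toLinAlgEquiv'_apply] at this



lemma cycle_two_nbrs {V : Type} {G : SimpleGraph V} {u : V} (q : G.Walk u u)
    (hq : q.IsCycle) :
    ∃ a b, a ≠ b ∧ G.Adj u a ∧ G.Adj u b ∧ a ∈ q.support ∧ b ∈ q.support := by
  match q with
  | .nil => exact absurd hq (Walk.IsCycle.not_of_nil)
  | .cons (v := w) h p =>
    have hic := (Walk.cons_isCycle_iff p h).mp hq
    have hpn : ¬ p.reverse.Nil := by
      rw [Walk.nil_iff_length_eq, Walk.length_reverse]
      have h3 := hq.three_le_length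
      simp only [Walk.length_cons] at h3
      omega
    obtain ⟨x, h', t, ht⟩ := Walk.not_nil_iff.mp hpn
    have hxmem : x ∈ p.support := by
      have : x ∈ p.reverse.support := by rw [ht]; simp
      rwa [Walk.support_reverse, List.mem_reverse] at this
    have hne : w ≠ x := by
      intro hwx
      apply hic.2
      have : s(u, x) ∈ p.reverse.edges := by rw [ht]; simp
      rw [Walk.edges_reverse, List.mem_reverse] at this
      subst hwx
      exact this
    exact ⟨w, x, hne, h, h', by simp, by simp [hxmem]⟩

lemma filter_tricho_card {α : Type} [DecidableEq α] (s : Finset α) (f : α → ℕ) (m : ℕ) :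
    (s.filter (fun v => f v < m)).card + (s.filter (fun v => f v = m)).card
      + (s.filter (fun v => m < f v)).card = s.card := by
  rw [Finset.card_filter, Finset.card_filter, Finset.card_filter,
    ← Finset.sum_add_distrib, ← Finset.sum_add_distrib]
  rw [Finset.card_eq_sum_ones s]
  apply Finset.sum_congr rfl
  intro v _
  rcases lt_trichotomy (f v) m with h | h | h
  · simp [h, Nat.lt_asymm h, Nat.ne_of_lt h]
  · simp [h]
  · simp [h, Nat.lt_asymm h, (Nat.ne_of_lt h).symm]

lemma unicyclic_structure {V : Type} [Fintype V] [DecidableEq V]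
    (G : SimpleGraph V) [DecidableRel G.Adj]
    (hconn : G.Connected) (huni : G.edgeFinset.card = Fintype.card V) :
    ∃ h : V → ℕ,
      (∀ u v, G.Adj u v → h v ≤ h u + 1) ∧
      (∀ u, h u = 0 →
        ((G.neighborFinset u).filter (fun v => h v = h u)).card = 2) ∧
      (∀ u, h u ≠ 0 →
        ((G.neighborFinset u).filter (fun v => h v < h u)).card = 1 ∧
        ((G.neighborFinset u).filter (fun v => h v = h u)).card = 0) := by
  classical
  haveI : Nonempty V := hconn.nonempty
  -- G is not acyclic
  have hnacyc : ¬ G.IsAcyclic := by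
    intro hacyc
    have := SimpleGraph.IsTree.card_edgeFinset ⟨hconn, hacyc⟩
    omega
  rw [SimpleGraph.IsAcyclic] at hnacyc
  push_neg at hnacyc
  obtain ⟨v₀, q, hq⟩ := hnacyc
  set C : Finset V := q.support.toFinset with hCdef
  have hCne : C.Nonempty := ⟨v₀, by simp [hCdef]⟩
  set h : V → ℕ := fun u => C.inf' hCne (fun w => G.dist u w) with hhdef
  have hle : ∀ u w, w ∈ C → h u ≤ G.dist u w := fun u w hw => Finset.inf'_le _ hw
  have hex : ∀ u, ∃ w ∈ C, h u = G.dist u w := fun u => Finset.exists_mem_eq_inf' hCne _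
  -- h u = 0 iff u ∈ C
  have hC0 : ∀ u, h u = 0 ↔ u ∈ C := by
    intro u
    constructor
    · intro h0
      obtain ⟨w, hw, hweq⟩ := hex u
      rw [h0] at hweq
      rwa [(hconn.dist_eq_zero_iff).mp hweq.symm]
    · intro hu
      have := hle u u hu
      simpa [SimpleGraph.dist_self] using this
  -- adjacency Lipschitz
  have hS1 : ∀ u v, G.Adj u v → h v ≤ h u + 1 := by
    intro u v hadj
    obtain ⟨w, hw, hweq⟩ := hex u
    have h1 : G.dist v w ≤ G.dist v u + G.dist u w := hconn.dist_triangle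
    have h2 : G.dist v u ≤ 1 := by
      have := SimpleGraph.dist_le (Walk.cons hadj.symm Walk.nil)
      simpa using this
    have := hle v w hw
    omega
  -- existence of a lower neighbor
  have hdown : ∀ u, h u ≠ 0 → ∃ v, G.Adj u v ∧ h v < h u := by
    intro u hu
    obtain ⟨w, hw, hweq⟩ := hex u
    obtain ⟨p, hp⟩ := (hconn u w).exists_walk_length_eq_dist
    have hpn : ¬ p.Nil := by
      rw [Walk.nil_iff_length_eq, hp, ← hweq]
      exact hu
    obtain ⟨x, hadj, t, htdef⟩ := Walk.not_nil_iff.mp hpn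
    refine ⟨x, hadj, ?_⟩
    have h1 : G.dist x w ≤ t.length := SimpleGraph.dist_le t
    have h2 : p.length = t.length + 1 := by rw [htdef]; simp
    have h3 := hle x w hw
    omega
  -- counts
  set dn : V → ℕ := fun u => ((G.neighborFinset u).filter (fun v => h v < h u)).card with hdn
  set lv : V → ℕ := fun u => ((G.neighborFinset u).filter (fun v => h v = h u)).card with hlv
  set up : V → ℕ := fun u => ((G.neighborFinset u).filter (fun v => h u < h v)).card with hup
  have hpart : ∀ u, dn u + lv u + up u = G.degree u := by
    intro u
    rw [hdn, hlv, hup]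
    exact filter_tricho_card _ _ _
  -- sum of degrees
  have hdeg : ∑ u, G.degree u = 2 * Fintype.card V := by
    rw [SimpleGraph.sum_degrees_eq_twice_card_edges, huni]
  -- down-sum equals up-sum
  have hK1 : ∑ u, dn u = ∑ u, up u := by
    have hcard : ∀ (P : V → V → Prop) [∀ u v, Decidable (P u v)] (u : V),
        ((G.neighborFinset u).filter (fun v => P u v)).card
          = ∑ v, if G.Adj u v ∧ P u v then 1 else 0 := by
      intro P _ u
      rw [SimpleGraph.neighborFinset_eq_filter, Finset.filter_filter, Finset.card_filter]
    calc ∑ u, dn u = ∑ u, ∑ v, if G.Adj u v ∧ h v < h u then 1 else 0 := by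
          refine Finset.sum_congr rfl fun u _ => ?_
          rw [hdn]
          exact hcard (fun u v => h v < h u) u
      _ = ∑ v, ∑ u, if G.Adj u v ∧ h v < h u then 1 else 0 := Finset.sum_comm
      _ = ∑ u, ∑ v, if G.Adj u v ∧ h u < h v then 1 else 0 := by
          refine Finset.sum_congr rfl fun u _ => Finset.sum_congr rfl fun v _ => ?_
          congr 1
          simp only [eq_iff_iff]
          constructor
          · rintro ⟨ha, hlt⟩; exact ⟨ha.symm, hlt⟩
          · rintro ⟨ha, hlt⟩; exact ⟨ha.symm, hlt⟩
      _ = ∑ u, up u := by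
          refine Finset.sum_congr rfl fun u _ => ?_
          rw [hup]
          exact (hcard (fun u v => h u < h v) u).symm
  -- down for C-vertices is 0
  have hK4a : ∀ u ∈ C, dn u = 0 := by
    intro u hu
    rw [hdn, Finset.card_eq_zero]
    apply Finset.filter_false_of_mem
    intro v _
    have := (hC0 u).mpr hu
    omega
  -- down for non-C vertices is ≥ 1
  have hK3 : ∀ u ∉ C, 1 ≤ dn u := by
    intro u hu
    obtain ⟨v, hadj, hlt⟩ := hdown u (fun h0 => hu ((hC0 u).mp h0))
    rw [hdn]
    refine Finset.card_pos.mpr ⟨v, ?_⟩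
    simp [SimpleGraph.mem_neighborFinset, hadj, hlt]
  -- level for C-vertices is ≥ 2
  have hK4b : ∀ u ∈ C, 2 ≤ lv u := by
    intro u hu
    have huq : u ∈ q.support := by rwa [hCdef, List.mem_toFinset] at hu
    have hq' := hq.rotate huq
    obtain ⟨a, b, hab, hua, hub, ha, hb⟩ := cycle_two_nbrs (q.rotate u huq) hq'
    have hmemC : ∀ x, G.Adj u x → x ∈ (q.rotate u huq).support → x ∈ C := by
      intro x hx hxs
      have hxt : x ∈ (q.rotate u huq).support.tail := by
        rcases Walk.mem_support_iff _ |>.mp hxs with rfl | ht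
        · exact absurd hx (G.irrefl)
        · exact ht
      have hrot := Walk.support_rotate q u huq
      have : x ∈ q.support.tail := (hrot.mem_iff).mp hxt
      rw [hCdef, List.mem_toFinset]
      exact List.mem_of_mem_tail this
    have haC := hmemC a hua ha
    have hbC := hmemC b hub hb
    rw [hlv]
    refine Finset.one_lt_card.mpr ⟨a, ?_, b, ?_, hab⟩
    · simp only [Finset.mem_filter, SimpleGraph.mem_neighborFinset]
      exact ⟨hua, by rw [(hC0 a).mpr haC, (hC0 u).mpr hu]⟩
    · simp only [Finset.mem_filter, SimpleGraph.mem_neighborFinset]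
      exact ⟨hub, by rw [(hC0 b).mpr hbC, (hC0 u).mpr hu]⟩
  -- global counting
  have hsplit : ∀ f : V → ℕ, ∑ u ∈ Finset.univ \ C, f u + ∑ u ∈ C, f u = ∑ u, f u :=
    fun f => Finset.sum_sdiff (Finset.subset_univ C)
  have hcardsplit : (Finset.univ \ C).card + C.card = Fintype.card V := by
    have := hsplit (fun _ => 1)
    simpa using this
  have hSdn_ge : (Finset.univ \ C).card ≤ ∑ u, dn u := by
    rw [← hsplit dn]
    have h1 : (Finset.univ \ C).card ≤ ∑ u ∈ Finset.univ \ C, dn u := by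
      rw [Finset.card_eq_sum_ones]
      exact Finset.sum_le_sum fun u hu => hK3 u (Finset.mem_sdiff.mp hu).2
    omega
  have hSlv_ge : 2 * C.card ≤ ∑ u, lv u := by
    have h1 : ∑ u ∈ C, 2 ≤ ∑ u ∈ C, lv u := Finset.sum_le_sum hK4b
    have h2 := hsplit lv
    simp only [Finset.sum_const, smul_eq_mul] at h1
    omega
  have htotal : ∑ u, dn u + ∑ u, lv u + ∑ u, up u = 2 * Fintype.card V := by
    rw [← hdeg, ← Finset.sum_add_distrib, ← Finset.sum_add_distrib]
    exact Finset.sum_congr rfl fun u _ => hpart u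
  -- equalities
  have hSdnC : ∑ u ∈ C, dn u = 0 := Finset.sum_eq_zero hK4a
  have hSdn_eq : ∑ u, dn u = (Finset.univ \ C).card := by omega
  have hSlv_eq : ∑ u, lv u = 2 * C.card := by omega
  -- pointwise equalities
  have hlv_out : ∀ u ∉ C, lv u = 0 := by
    intro u hu
    have h1 : ∑ u ∈ C, 2 ≤ ∑ u ∈ C, lv u := by
      simpa using Finset.sum_le_sum hK4b
    have h2 := hsplit lv
    have h3 : ∑ u ∈ Finset.univ \ C, lv u = 0 := by
      simp only [Finset.sum_const, smul_eq_mul] at h1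
      omega
    exact (Finset.sum_eq_zero_iff.mp h3) u (Finset.mem_sdiff.mpr ⟨Finset.mem_univ u, hu⟩)
  have hlv_in : ∀ u ∈ C, lv u = 2 := by
    intro u hu
    by_contra hne
    have hgt : 2 < lv u := lt_of_le_of_ne (hK4b u hu) (Ne.symm hne)
    have : ∑ x ∈ C, 2 < ∑ x ∈ C, lv x :=
      Finset.sum_lt_sum hK4b ⟨u, hu, hgt⟩
    simp only [Finset.sum_const, smul_eq_mul] at this
    have h2 := hsplit lv
    omega
  have hdn_out : ∀ u ∉ C, dn u = 1 := by
    intro u hu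
    by_contra hne
    have hgt : 1 < dn u := lt_of_le_of_ne (hK3 u hu) (Ne.symm hne)
    have h1 : (Finset.univ \ C).card < ∑ x ∈ Finset.univ \ C, dn x := by
      have := Finset.sum_lt_sum (fun x hx => hK3 x (Finset.mem_sdiff.mp hx).2)
        ⟨u, Finset.mem_sdiff.mpr ⟨Finset.mem_univ u, hu⟩, hgt⟩
      simpa using this
    have h2 := hsplit dn
    omega
  refine ⟨h, hS1, ?_, ?_⟩
  · intro u h0
    exact hlv_in u ((hC0 u).mp h0)
  · intro u h0
    have hu : u ∉ C := fun hu => h0 ((hC0 u).mpr hu)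
    exact ⟨hdn_out u hu, hlv_out u hu⟩

lemma exists_weights {V : Type} [Fintype V] [DecidableEq V] (c : ℝ) (hc : 0 < c)
    (G : SimpleGraph V) [DecidableRel G.Adj]
    (hconn : G.Connected) (huni : G.edgeFinset.card = Fintype.card V) :
    ∃ ω : V → ℝ, (∀ u, 0 < ω u) ∧
      ∀ u, Real.sqrt (1 + c) * (∑ v ∈ G.neighborFinset u, ω v)
        < (c + (G.degree u : ℝ)) * ω u := by
  classical
  obtain ⟨h, hS1, hin, hout⟩ := unicyclic_structure G hconn huni
  haveI : Nonempty V := hconn.nonempty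
  set β : ℝ := Real.sqrt (1 + c) with hβdef
  have hc1 : (0:ℝ) < 1 + c := by linarith
  have hβpos : 0 < β := Real.sqrt_pos.mpr hc1
  have hβsq : β ^ 2 = 1 + c := Real.sq_sqrt hc1.le
  have hβ1 : 1 < β := by nlinarith [hβsq, hβpos]
  have hb1 : 0 < β - 1 := by linarith
  have hb2 : 0 < (β - 1)^2 := by positivity
  set n : ℝ := (Fintype.card V : ℝ) with hndef
  have hn1 : 1 ≤ n := by
    rw [hndef]; exact_mod_cast Fintype.card_pos
  have hn0 : 0 < n := by linarith
  set δ : ℝ := min (1/2) (min ((1+c)/(4*n)) ((β-1)^2/(4*n))) with hδdef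
  have hδpos : 0 < δ := by
    apply lt_min (by norm_num)
    exact lt_min (by positivity) (by positivity)
  have hδhalf : δ ≤ 1/2 := min_le_left _ _
  have hδc : n * δ ≤ (1+c)/4 := by
    have h1 : δ ≤ (1+c)/(4*n) := le_trans (min_le_right _ _) (min_le_left _ _)
    calc n * δ ≤ n * ((1+c)/(4*n)) := mul_le_mul_of_nonneg_left h1 hn0.le
      _ = (1+c)/4 := by field_simp
  have hδβ : n * δ ≤ (β-1)^2/4 := by
    have h1 : δ ≤ (β-1)^2/(4*n) := le_trans (min_le_right _ _) (min_le_right _ _)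
    calc n * δ ≤ n * ((β-1)^2/(4*n)) := mul_le_mul_of_nonneg_left h1 hn0.le
      _ = (β-1)^2/4 := by field_simp
  -- the height-profile weights
  set χ : ℕ → ℝ := fun k => Nat.rec 1 (fun m x => x / (β * (1 - δ ^ (m+1)))) k with hχdef
  have hχ0 : χ 0 = 1 := rfl
  have hpowle : ∀ m : ℕ, δ ^ (m + 1) ≤ δ := by
    intro m
    calc δ ^ (m+1) ≤ δ ^ 1 := by
          apply pow_le_pow_of_le_one hδpos.le (by linarith) (by omega)
      _ = δ := pow_one δ
  have hfac : ∀ m : ℕ, 0 < 1 - δ ^ (m + 1) := by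
    intro m
    have := hpowle m
    linarith
  have hχsucc : ∀ m : ℕ, χ (m + 1) = χ m / (β * (1 - δ ^ (m+1))) := fun m => rfl
  have hχpos : ∀ m : ℕ, 0 < χ m := by
    intro m
    induction m with
    | zero => rw [hχ0]; norm_num
    | succ m ih =>
      rw [hχsucc m]
      exact div_pos ih (mul_pos hβpos (hfac m))
  have hrec : ∀ m : ℕ, χ m = β * (1 - δ ^ (m+1)) * χ (m + 1) := by
    intro m
    have hne : β * (1 - δ ^ (m+1)) ≠ 0 := (mul_pos hβpos (hfac m)).ne'
    rw [hχsucc m, mul_comm, div_mul_cancel₀ _ hne]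
  have hkn' : ∀ s : Finset V, (s.card : ℝ) ≤ n := by
    intro s
    rw [hndef]
    exact_mod_cast Finset.card_le_univ s
  clear_value χ δ β n
  clear hχdef hδdef hβdef hndef
  have key0 : ∀ k' : ℝ, 0 ≤ k' → k'*δ ≤ (β-1)^2/4 →
      2*β*(1-δ) + k' < (c+(2+k'))*(1-δ) := by
    intro k' hk0 hkδ
    nlinarith [hβsq, hb2, mul_nonneg (show (0:ℝ) ≤ 1/2 - δ by linarith) hb2.le,
      hδpos.le, mul_nonneg hk0 hδpos.le]
  have key1 : ∀ x y k' : ℝ, 0 < x → y = x*δ → y ≤ 1/2 → 0 ≤ k' → k'*δ ≤ (1+c)/4 →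
      (1+c)*(1-x)*(1-y) + k' < (c+(1+k'))*(1-y) := by
    intro x y k' hx hy hy2 hk0 hkδ
    have h2 : k'*y ≤ (1+c)/4*x := by
      rw [hy]
      calc k'*(x*δ) = (k'*δ)*x := by ring
        _ ≤ (1+c)/4*x := mul_le_mul_of_nonneg_right hkδ hx.le
    nlinarith [h2, mul_pos hc1 hx,
      mul_nonneg (mul_pos hc1 hx).le (show (0:ℝ) ≤ 1/2 - y by linarith)]
  refine ⟨fun u => χ (h u), fun u => hχpos _, ?_⟩
  intro u
  by_cases h0 : h u = 0
  -- case: cycle vertices (height 0)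
  · have hlv := hin u h0
    have hcards := Finset.card_filter_add_card_filter_not
      (s := G.neighborFinset u) (fun v => h v = h u)
    set k : ℝ := (((G.neighborFinset u).filter (fun v => ¬ h v = h u)).card : ℝ) with hk
    have hkn : k ≤ n := hkn' _
    have hk0 : 0 ≤ k := Nat.cast_nonneg _
    have hdeg : (G.degree u : ℝ) = 2 + k := by
      rw [hk, ← SimpleGraph.card_neighborFinset_eq_degree, ← hcards, hlv]
      push_cast
      ring
    have hAsum : ∑ v ∈ (G.neighborFinset u).filter (fun v => h v = h u), χ (h v)
        = 2 * χ 0 := by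
      have hconst : ∀ v ∈ (G.neighborFinset u).filter (fun v => h v = h u),
          χ (h v) = χ (h u) := by
        intro v hv
        rw [(Finset.mem_filter.mp hv).2]
      rw [Finset.sum_congr rfl hconst, Finset.sum_const, hlv, h0, nsmul_eq_mul]
      norm_num
    have hBsum : ∑ v ∈ (G.neighborFinset u).filter (fun v => ¬ h v = h u), χ (h v)
        = k * χ 1 := by
      have hconst : ∀ v ∈ (G.neighborFinset u).filter (fun v => ¬ h v = h u),
          χ (h v) = χ 1 := by
        intro v hv
        obtain ⟨hvN, hvne⟩ := Finset.mem_filter.mp hv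
        have hadj := (SimpleGraph.mem_neighborFinset _ _ _).mp hvN
        have hle1 := hS1 u v hadj
        rw [h0] at hle1 hvne
        have : h v = 1 := by omega
        rw [this]
      rw [Finset.sum_congr rfl hconst, Finset.sum_const, nsmul_eq_mul, ← hk]
    have hsplit : ∑ v ∈ G.neighborFinset u, χ (h v) = 2 * χ 0 + k * χ 1 := by
      rw [← Finset.sum_filter_add_sum_filter_not (G.neighborFinset u)
        (fun v => h v = h u) (fun v => χ (h v)), hAsum, hBsum]
    show β * (∑ v ∈ G.neighborFinset u, χ (h v)) < (c + (G.degree u : ℝ)) * χ (h u)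
    rw [hsplit, hdeg, h0, hrec 0]
    simp only [zero_add, pow_one]
    -- now a polynomial inequality in χ 1
    have hχ1 : 0 < χ 1 := hχpos 1
    have hred : 2*β*(1-δ) + k < (c+(2+k))*(1-δ) :=
      key0 k hk0 (le_trans (mul_le_mul_of_nonneg_right hkn hδpos.le) hδβ)
    calc β * (2 * (β * (1 - δ) * χ 1) + k * χ 1)
        = (β * χ 1) * (2*β*(1-δ) + k) := by ring
      _ < (β * χ 1) * ((c+(2+k))*(1-δ)) :=
          mul_lt_mul_of_pos_left hred (mul_pos hβpos hχ1)
      _ = (c + (2+k)) * (β * (1 - δ) * χ 1) := by ring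
  -- case: tree vertices (height m+1)
  · obtain ⟨m, hm⟩ : ∃ m, h u = m + 1 := ⟨h u - 1, by omega⟩
    obtain ⟨hdn1, hlv0⟩ := hout u h0
    have hcards := Finset.card_filter_add_card_filter_not
      (s := G.neighborFinset u) (fun v => h v < h u)
    set k : ℝ := (((G.neighborFinset u).filter (fun v => ¬ h v < h u)).card : ℝ) with hk
    have hkn : k ≤ n := hkn' _
    have hk0 : 0 ≤ k := Nat.cast_nonneg _
    have hdeg : (G.degree u : ℝ) = 1 + k := by
      rw [hk, ← SimpleGraph.card_neighborFinset_eq_degree, ← hcards, hdn1]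
      push_cast
      ring
    have hnolevel : ∀ v ∈ G.neighborFinset u, h v ≠ h u := by
      intro v hvN hveq
      have : v ∈ (G.neighborFinset u).filter (fun v => h v = h u) :=
        Finset.mem_filter.mpr ⟨hvN, hveq⟩
      rw [Finset.card_eq_zero.mp hlv0] at this
      exact absurd this (Finset.notMem_empty v)
    have hAsum : ∑ v ∈ (G.neighborFinset u).filter (fun v => h v < h u), χ (h v)
        = χ m := by
      have hconst : ∀ v ∈ (G.neighborFinset u).filter (fun v => h v < h u),
          χ (h v) = χ m := by
        intro v hv
        obtain ⟨hvN, hvlt⟩ := Finset.mem_filter.mp hv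
        have hadj := (SimpleGraph.mem_neighborFinset _ _ _).mp hvN
        have hge := hS1 v u hadj.symm
        have : h v = m := by omega
        rw [this]
      rw [Finset.sum_congr rfl hconst, Finset.sum_const, hdn1, one_nsmul]
    have hBsum : ∑ v ∈ (G.neighborFinset u).filter (fun v => ¬ h v < h u), χ (h v)
        = k * χ (m+2) := by
      have hconst : ∀ v ∈ (G.neighborFinset u).filter (fun v => ¬ h v < h u),
          χ (h v) = χ (m+2) := by
        intro v hv
        obtain ⟨hvN, hvge⟩ := Finset.mem_filter.mp hv
        have hadj := (SimpleGraph.mem_neighborFinset _ _ _).mp hvN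
        have hle1 := hS1 u v hadj
        have hne := hnolevel v hvN
        have : h v = m + 2 := by omega
        rw [this]
      rw [Finset.sum_congr rfl hconst, Finset.sum_const, nsmul_eq_mul, ← hk]
    have hsplit : ∑ v ∈ G.neighborFinset u, χ (h v) = χ m + k * χ (m+2) := by
      rw [← Finset.sum_filter_add_sum_filter_not (G.neighborFinset u)
        (fun v => h v < h u) (fun v => χ (h v)), hAsum, hBsum]
    show β * (∑ v ∈ G.neighborFinset u, χ (h v)) < (c + (G.degree u : ℝ)) * χ (h u)
    rw [hsplit, hdeg, hm, hrec m, hrec (m+1)]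
    -- now a polynomial inequality in χ (m+2)
    have hX : 0 < χ (m+2) := hχpos (m+2)
    have hx : 0 < δ^(m+1) := pow_pos hδpos _
    have hy : δ^(m+1+1) = δ^(m+1)*δ := pow_succ δ (m+1)
    have hy2 : δ^(m+1+1) ≤ 1/2 := le_trans (hpowle (m+1)) hδhalf
    have hred : (1+c)*(1-δ^(m+1))*(1-δ^(m+1+1)) + k
        < (c+(1+k))*(1-δ^(m+1+1)) :=
      key1 _ _ k hx hy hy2 hk0
        (le_trans (mul_le_mul_of_nonneg_right hkn hδpos.le) hδc)
    have e : (1:ℝ)+c = β*β := by rw [← pow_two β, hβsq]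
    calc β * (β * (1 - δ^(m+1)) * (β * (1 - δ^(m+1+1)) * χ (m+1+1)) + k * χ (m+1+1))
        = (β * χ (m+1+1)) * ((1+c) * (1-δ^(m+1)) * (1-δ^(m+1+1)) + k) := by
          rw [e]; ring
      _ < (β * χ (m+1+1)) * ((c+(1+k)) * (1-δ^(m+1+1))) :=
          mul_lt_mul_of_pos_left hred (mul_pos hβpos hX)
      _ = (c + (1+k)) * (β * (1 - δ^(m+1+1)) * χ (m+1+1)) := by ring

/-- for a finite connected unicyclic graph G (as many edges as
vertices) and c > 0, sr(K_G) < 1/√(1+c). -/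
theorem unicyclic_spectral_radius_lt
    {V : Type} [Fintype V] [DecidableEq V] (c : ℝ) (hc : 0 < c)
    (G : SimpleGraph V) [DecidableRel G.Adj]
    (hconn : G.Connected) (huni : G.edgeFinset.card = Fintype.card V) :
    sr (Kg c G) < 1 / Real.sqrt (1 + c) := by
  classical
  haveI : Nonempty V := hconn.nonempty
  obtain ⟨ω, hωpos, hω⟩ := exists_weights c hc G hconn huni
  set β : ℝ := Real.sqrt (1 + c) with hβdef
  have hc1 : (0:ℝ) < 1 + c := by linarith
  have hβpos : 0 < β := Real.sqrt_pos.mpr hc1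
  have hcd : ∀ u : V, (0:ℝ) < c + (G.degree u : ℝ) := by
    intro u
    have : (0:ℝ) ≤ (G.degree u : ℝ) := Nat.cast_nonneg _
    linarith
  -- the weighted row sums
  set W : V → ℝ := fun u =>
    (∑ v ∈ G.neighborFinset u, ω v) / ((c + (G.degree u : ℝ)) * ω u) with hWdef
  have hWnonneg : ∀ u, 0 ≤ W u := by
    intro u
    apply div_nonneg
    · exact Finset.sum_nonneg fun v _ => (hωpos v).le
    · exact (mul_pos (hcd u) (hωpos u)).le
  have hWlt : ∀ u, W u < 1 / β := by
    intro u
    rw [hWdef, div_lt_div_iff₀ (mul_pos (hcd u) (hωpos u)) hβpos]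
    calc (∑ v ∈ G.neighborFinset u, ω v) * β
        = β * (∑ v ∈ G.neighborFinset u, ω v) := by ring
      _ < (c + (G.degree u : ℝ)) * ω u := hω u
      _ = 1 * ((c + (G.degree u : ℝ)) * ω u) := by ring
  set w : ℝ := Finset.univ.sup' Finset.univ_nonempty W with hwdef
  have hwlt : w < 1 / β := by
    rw [hwdef]
    exact (Finset.sup'_lt_iff _).mpr fun u _ => hWlt u
  have hwnonneg : 0 ≤ w := by
    obtain ⟨u⟩ := ‹Nonempty V›
    exact le_trans (hWnonneg u) (Finset.le_sup' W (Finset.mem_univ u))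
  -- every eigenvalue has modulus at most w
  have hbound : ∀ z ∈ (fun z : ℂ => ‖z‖) '' spectrum ℂ ((Kg c G).map Complex.ofReal), z ≤ w := by
    rintro z ⟨μ, hμ, rfl⟩
    obtain ⟨x, hx0, hxe⟩ := eigvec_of_mem_spectrum _ μ hμ
    -- the eigen-equation, rowwise
    have hrow : ∀ u : V, μ * x u * ((c + (G.degree u : ℝ)) : ℂ)
        = ∑ v ∈ G.neighborFinset u, x v := by
      intro u
      have h1 := congrFun hxe u
      have h2 : ((Kg c G).map Complex.ofReal).mulVec x u
          = (∑ v ∈ G.neighborFinset u, x v) / ((c + (G.degree u : ℝ)) : ℂ) := by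
        simp only [Matrix.mulVec, Matrix.map_apply, Kg, Matrix.of_apply, dotProduct,
          SimpleGraph.adjMatrix_apply]
        rw [Finset.sum_div]
        rw [SimpleGraph.neighborFinset_eq_filter, Finset.sum_filter]
        apply Finset.sum_congr rfl
        intro v _
        by_cases hadj : G.Adj u v <;>
          simp [hadj, div_eq_mul_inv, mul_comm]
      have hcdne : ((c + (G.degree u : ℝ)) : ℂ) ≠ 0 := by
        exact_mod_cast (hcd u).ne'
      rw [h2, Pi.smul_apply, smul_eq_mul, div_eq_iff hcdne] at h1
      rw [← h1]
    -- pick the maximizing vertex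
    obtain ⟨u₀, -, hmax⟩ := Finset.exists_max_image Finset.univ
      (fun u => ‖x u‖ / ω u) Finset.univ_nonempty
    set t : ℝ := ‖x u₀‖ / ω u₀ with htdef
    have htmax : ∀ v, ‖x v‖ ≤ t * ω v := by
      intro v
      have := hmax v (Finset.mem_univ v)
      rw [div_le_iff₀ (hωpos v)] at this
      calc ‖x v‖ ≤ ‖x v‖ := le_refl _
        _ ≤ t * ω v := by rw [htdef]; exact this
    have htpos : 0 < t := by
      obtain ⟨v, hv⟩ := Function.ne_iff.mp hx0
      have h1 : 0 < ‖x v‖ := by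
        simpa using norm_pos_iff.mpr hv
      have h2 : 0 < ‖x v‖ / ω v := div_pos h1 (hωpos v)
      exact lt_of_lt_of_le h2 (hmax v (Finset.mem_univ v))
    have hxu₀ : ‖x u₀‖ = t * ω u₀ := by
      rw [htdef, div_mul_cancel₀ _ (hωpos u₀).ne']
    -- main estimate
    have hest : ‖μ‖ * (t * ω u₀) * (c + (G.degree u₀ : ℝ))
        ≤ t * ∑ v ∈ G.neighborFinset u₀, ω v := by
      have h1 := hrow u₀
      have h2 : ‖μ * x u₀ * ((c + (G.degree u₀ : ℝ)) : ℂ)‖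
          = ‖μ‖ * (t * ω u₀) * (c + (G.degree u₀ : ℝ)) := by
        rw [norm_mul, norm_mul, hxu₀,
          show ((c:ℂ) + ((G.degree u₀ : ℝ) : ℂ)) = (((c + (G.degree u₀:ℝ)) : ℝ) : ℂ) by
            push_cast; ring,
          Complex.norm_real, Real.norm_eq_abs, abs_of_pos (hcd u₀)]
      rw [← h2, h1]
      calc ‖∑ v ∈ G.neighborFinset u₀, x v‖
          ≤ ∑ v ∈ G.neighborFinset u₀, ‖x v‖ :=
            norm_sum_le _ _
        _ ≤ ∑ v ∈ G.neighborFinset u₀, t * ω v :=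
            Finset.sum_le_sum fun v _ => htmax v
        _ = t * ∑ v ∈ G.neighborFinset u₀, ω v := by rw [Finset.mul_sum]
    have hWu₀ : ∑ v ∈ G.neighborFinset u₀, ω v
        = W u₀ * ((c + (G.degree u₀ : ℝ)) * ω u₀) := by
      simp only [hWdef]
      exact (div_mul_cancel₀ _ (mul_pos (hcd u₀) (hωpos u₀)).ne').symm
    rw [hWu₀] at hest
    have hWw : W u₀ ≤ w := Finset.le_sup' W (Finset.mem_univ u₀)
    have hfinal : ‖μ‖ ≤ W u₀ := by
      have hpos : 0 < t * ω u₀ * (c + (G.degree u₀ : ℝ)) :=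
        mul_pos (mul_pos htpos (hωpos u₀)) (hcd u₀)
      nlinarith [hest, hpos]
    exact le_trans hfinal hWw
  have hsr : sr (Kg c G) ≤ w := Real.sSup_le hbound hwnonneg
  exact lt_of_le_of_lt hsr hwlt
end

section
/- For every c > 0 there exists ε > 0, depending only on c, such that for every finite tree G in which every vertex has degree d(v,G) < 1 + c, one has sr(K_G) ≤ 1/√(1+c) − ε. In particular, sr(K_G) does not approach 1/√(1+c) along any sequence of such bounded-degree trees, even as |G| → ∞. -/
open SimpleGraph Finset

/-- In a tree, every path realizes the distance between its endpoints. -/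
lemma tree_length_eq_dist {V : Type} {G : SimpleGraph V} (hT : G.IsTree) {a b : V}
    (p : G.Walk a b) (hp : p.IsPath) : p.length = G.dist a b := by
  obtain ⟨q, hq, hql⟩ := hT.isConnected.exists_path_of_dist a b
  rw [(hT.existsUnique_path a b).unique hp hq, hql]

/-- In a tree, every vertex `u ≠ r` has a unique neighbor closer to `r`;
all other neighbors are farther. -/
lemma tree_parent {V : Type} {G : SimpleGraph V} (hT : G.IsTree) (r : V) {u : V} (hu : u ≠ r) :
    ∃ w, G.Adj u w ∧ G.dist r w + 1 = G.dist r u ∧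
      ∀ v, G.Adj u v → v ≠ w → G.dist r v = G.dist r u + 1 := by
  obtain ⟨q, hq, hql⟩ := hT.isConnected.exists_path_of_dist u r
  cases q with
  | nil => exact absurd rfl hu
  | @cons _ w _ hadj tail =>
    rw [SimpleGraph.Walk.cons_isPath_iff] at hq
    obtain ⟨htail, hunot⟩ := hq
    have htl : tail.length = G.dist r w := by
      rw [tree_length_eq_dist hT tail htail, SimpleGraph.dist_comm]
    have hlen : tail.length + 1 = G.dist r u := by
      rw [← SimpleGraph.dist_comm, ← hql, SimpleGraph.Walk.length_cons]
    refine ⟨w, hadj, by omega, ?_⟩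
    intro v hv hvw
    have hvu : v ≠ u := hv.ne'
    classical
    have hvsupp : v ∉ (SimpleGraph.Walk.cons hadj tail).support := by
      intro hmem
      rw [SimpleGraph.Walk.support_cons, List.mem_cons] at hmem
      rcases hmem with h | h
      · exact hvu h
      · -- build a second path from u to r through v
        have hdrop : (tail.dropUntil v h).IsPath := htail.dropUntil h
        have hudrop : u ∉ (tail.dropUntil v h).support := fun hmem =>
          hunot (SimpleGraph.Walk.support_dropUntil_subset tail h hmem)
        have hq1 : (SimpleGraph.Walk.cons hv (tail.dropUntil v h)).IsPath :=
          SimpleGraph.Walk.IsPath.cons hdrop hudrop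
        have hq0 : (SimpleGraph.Walk.cons hadj tail).IsPath :=
          SimpleGraph.Walk.IsPath.cons htail hunot
        have := (hT.existsUnique_path u r).unique hq1 hq0
        have hgv := congrArg (fun p => SimpleGraph.Walk.getVert p 1) this
        simp only [SimpleGraph.Walk.getVert_cons_succ, SimpleGraph.Walk.getVert_zero] at hgv
        exact hvw hgv
    -- the path from r to v through u
    have hq0 : (SimpleGraph.Walk.cons hadj tail).IsPath :=
      SimpleGraph.Walk.IsPath.cons htail hunot
    have hp2 : ((SimpleGraph.Walk.cons hadj tail).reverse.concat hv).IsPath := by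
      rw [← SimpleGraph.Walk.isPath_reverse_iff, SimpleGraph.Walk.reverse_concat,
        SimpleGraph.Walk.reverse_reverse]
      exact SimpleGraph.Walk.IsPath.cons hq0 hvsupp
    have hl2 := tree_length_eq_dist hT _ hp2
    rw [SimpleGraph.Walk.length_concat, SimpleGraph.Walk.length_reverse,
      SimpleGraph.Walk.length_cons] at hl2
    omega

/-- Weighted row-sum bound for the spectral radius. -/
lemma sr_le_of_row_bound {V : Type} [Fintype V] [DecidableEq V] [Nonempty V]
    (A : Matrix V V ℝ) (hA : ∀ u v, 0 ≤ A u v) (P : V → ℝ) (hP : ∀ v, 0 < P v)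
    {ρ : ℝ} (hρ : 0 ≤ ρ) (hrow : ∀ u, ∑ v, A u v * P v ≤ ρ * P u) :
    sr A ≤ ρ := by
  apply Real.sSup_le _ hρ
  rintro y ⟨z, hz, rfl⟩
  have hz' : z ∈ spectrum ℂ (Matrix.toLinAlgEquiv' (A.map Complex.ofReal)) := by
    rw [AlgEquiv.spectrum_eq]; exact hz
  have hev : Module.End.HasEigenvalue (Matrix.toLinAlgEquiv' (A.map Complex.ofReal)) z :=
    Module.End.hasEigenvalue_iff_mem_spectrum.mpr hz'
  obtain ⟨x, hx⟩ := hev.exists_hasEigenvector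
  have hx0 := hx.right
  have happ : ∀ u, ∑ v, (A u v : ℂ) * x v = z * x u := by
    intro u
    have h1 := hx.apply_eq_smul
    rw [Matrix.toLinAlgEquiv'_apply] at h1
    have h2 := congrFun h1 u
    simpa [Matrix.mulVec, dotProduct, Matrix.map_apply] using h2
  obtain ⟨u, hu⟩ := Finite.exists_max (fun v => ‖x v‖ / P v)
  have hxu : 0 < ‖x u‖ := by
    rcases lt_or_ge 0 ‖x u‖ with h | h
    · exact h
    · exfalso
      apply hx0
      funext v
      have h1 := hu v
      have h2 : ‖x u‖ = 0 := le_antisymm h (norm_nonneg _)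
      rw [h2, zero_div] at h1
      have h3 : 0 ≤ ‖x v‖ / P v := div_nonneg (norm_nonneg _) (hP v).le
      have h4 : ‖x v‖ / P v = 0 := le_antisymm h1 h3
      have h5 : ‖x v‖ = 0 := by
        rcases div_eq_zero_iff.mp h4 with h4 | h4
        · exact h4
        · exact absurd h4 (hP v).ne'
      show x v = (0 : V → ℂ) v
      rw [Pi.zero_apply]
      exact norm_eq_zero.mp h5
  have key : ‖z‖ * ‖x u‖ ≤ ρ * ‖x u‖ := by
    calc ‖z‖ * ‖x u‖ = ‖z * x u‖ := by rw [norm_mul]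
    _ = ‖∑ v, (A u v : ℂ) * x v‖ := by rw [happ u]
    _ ≤ ∑ v, ‖(A u v : ℂ) * x v‖ := norm_sum_le _ _
    _ = ∑ v, A u v * ‖x v‖ := by
        refine Finset.sum_congr rfl fun v _ => ?_
        rw [norm_mul, Complex.norm_real, Real.norm_of_nonneg (hA u v)]
    _ ≤ ∑ v, A u v * (P v * (‖x u‖ / P u)) := by
        refine Finset.sum_le_sum fun v _ => ?_
        refine mul_le_mul_of_nonneg_left ?_ (hA u v)
        have := (div_le_iff₀ (hP v)).mp (hu v)
        linarith [this]
    _ = (∑ v, A u v * P v) * (‖x u‖ / P u) := by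
        rw [Finset.sum_mul]
        exact Finset.sum_congr rfl fun v _ => by ring
    _ ≤ (ρ * P u) * (‖x u‖ / P u) :=
        mul_le_mul_of_nonneg_right (hrow u) (div_nonneg (norm_nonneg _) (hP u).le)
    _ = ρ * ‖x u‖ := by
        field_simp [(hP u).ne']
  exact le_of_mul_le_mul_right key hxu

lemma aux_div (x y q cd g : ℝ) (hg : 0 < g) (hq : 0 < q) (h : x * q ≤ y * cd) :
    x / g ≤ y / (g * q) * cd := by
  rw [div_mul_eq_mul_div, div_le_div_iff₀ hg (mul_pos hg hq)]
  nlinarith [mul_le_mul_of_nonneg_right h hg.le]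

/-- The purely arithmetic part: existence of the weights and the gap. -/
lemma arith_part (c : ℝ) (hc : 0 < c) :
    ∃ ρ t g : ℝ, 0 < ρ ∧ ρ < 1 / Real.sqrt (1 + c) ∧ 0 < t ∧ t ≤ 1 ∧ g * t = 1 ∧ 1 ≤ g ∧
      ∀ n : ℕ, 1 ≤ n → ((n : ℝ) < 1 + c) → g + ((n : ℝ) - 1) * t ≤ ρ * (c + (n : ℝ)) := by
  set Dn : ℕ := ⌈c⌉₊ with hDn
  have hD1 : 1 ≤ (Dn : ℝ) := by
    have : 1 ≤ Dn := Nat.one_le_ceil_iff.mpr hc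
    exact_mod_cast this
  have hDc : (Dn : ℝ) ≤ c + 1 := by
    have := Nat.ceil_lt_add_one (le_of_lt hc)
    linarith
  set D : ℝ := (Dn : ℝ) with hD
  set m : ℝ := (c + D) / 2 with hm
  set a : ℝ := max 1 m with ham
  have ha1 : 1 ≤ a := le_max_left _ _
  have ham' : m ≤ a := le_max_right _ _
  have hacb : a ≤ 1 + c := by
    apply max_le (by linarith)
    rw [hm]; linarith
  set g : ℝ := Real.sqrt a with hg
  have hg0 : 0 < g := Real.sqrt_pos.mpr (by linarith)
  have hgg : g * g = a := Real.mul_self_sqrt (by linarith)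
  have hg1 : 1 ≤ g := by nlinarith
  set t : ℝ := g⁻¹ with ht
  have ht0 : 0 < t := inv_pos.mpr hg0
  have hgt : g * t = 1 := mul_inv_cancel₀ (ne_of_gt hg0)
  have ht1 : t ≤ 1 := by
    rw [ht]
    exact inv_le_one_of_one_le₀ hg1
  have hcD : 0 < c + D := by linarith
  set ρ : ℝ := (a + D - 1) / (g * (c + D)) with hρ
  have hρ0 : 0 < ρ := div_pos (by linarith) (by positivity)
  have hb0 : (0 : ℝ) < 1 + c := by linarith
  have hsb0 : 0 < Real.sqrt (1 + c) := Real.sqrt_pos.mpr hb0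
  have hbb : Real.sqrt (1 + c) * Real.sqrt (1 + c) = 1 + c := Real.mul_self_sqrt hb0.le
  clear_value Dn D m a g t ρ
  refine ⟨ρ, t, g, hρ0, ?_, ht0, ht1, hgt, hg1, ?_⟩
  · -- ρ < 1/√(1+c)
    rw [hρ, div_lt_div_iff₀ (by positivity) hsb0]
    set s : ℝ := Real.sqrt (1 + c) with hs
    by_cases hm1 : 1 ≤ m
    · have haa : a = m := by rw [ham]; exact max_eq_right hm1
      have hmb : m < 1 + c := by rw [hm]; linarith
      have hgs : g < s := by
        rw [hg, hs, haa]
        exact Real.sqrt_lt_sqrt (by linarith) hmb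
      have e1 : a + D - 1 = 3 * (g * g) - s * s := by
        rw [hgg, haa, hbb]
        rw [hm]; ring
      have e2 : c + D = 2 * (g * g) := by
        rw [hgg, haa, hm]; ring
      rw [e1, e2]
      have hkey : 0 < (s - g) * (s - g) * (s + 2 * g) :=
        mul_pos (mul_pos (sub_pos.mpr hgs) (sub_pos.mpr hgs)) (by positivity)
      nlinarith [hkey]
    · push_neg at hm1
      have haa : a = 1 := by rw [ham]; exact max_eq_left hm1.le
      have hg1' : g = 1 := by rw [hg, haa, Real.sqrt_one]
      have hD1' : D = 1 := by
        have h2 : c + D < 2 := by rw [hm] at hm1; linarith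
        have h3 : D < 2 := by linarith
        have h4 : Dn < 2 := by rw [hD] at h3; exact_mod_cast h3
        have h5 : 1 ≤ Dn := by rw [hDn]; exact Nat.one_le_ceil_iff.mpr hc
        have h6 : Dn = 1 := by omega
        rw [hD, h6]; norm_num
      rw [haa, hg1', hD1']
      have hs1 : 1 < s := by nlinarith
      nlinarith
  · -- per-degree key inequality
    intro n hn1 hnc
    have hnD : (n : ℝ) ≤ D := by
      have h1 : n ≤ Dn := by
        by_contra h
        push_neg at h
        have h2 : (Dn : ℝ) + 1 ≤ (n : ℝ) := by exact_mod_cast h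
        have h3 : c ≤ (Dn : ℝ) := by
          rw [hDn]
          exact Nat.le_ceil c
        linarith
      rw [hD]
      exact_mod_cast h1
    set d : ℝ := (n : ℝ) with hd
    have hd1 : 1 ≤ d := by rw [hd]; exact_mod_cast hn1
    have hne : (a + d - 1) * (c + D) ≤ (a + D - 1) * (c + d) := by
      nlinarith [mul_nonneg (sub_nonneg.mpr hnD) (by linarith : (0:ℝ) ≤ c + 1 - a)]
    have hlhs : g + (d - 1) * t = (a + d - 1) / g := by
      rw [eq_div_iff (ne_of_gt hg0)]
      have htg : t * g = 1 := by rw [mul_comm]; exact hgt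
      linear_combination (d - 1) * htg + hgg
    rw [hlhs, hρ]
    exact aux_div _ _ _ _ _ hg0 hcD hne

/-- for every c > 0 there is ε > 0 (depending only on c) such that
for every finite tree G all of whose vertex degrees are < 1 + c,
sr(K_G) ≤ 1/√(1+c) − ε. -/
theorem bounded_degree_trees_spectral_radius_uniformly_below
    (c : ℝ) (hc : 0 < c) :
    ∃ ε : ℝ, 0 < ε ∧
      ∀ (V : Type) [Fintype V] [DecidableEq V] (G : SimpleGraph V) [DecidableRel G.Adj],
        G.IsTree → (∀ v : V, (G.degree v : ℝ) < 1 + c) →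
        sr (Kg c G) ≤ 1 / Real.sqrt (1 + c) - ε := by
  obtain ⟨ρ, t, g, hρ0, hρlt, ht0, ht1, hgt, hg1, hkey⟩ := arith_part c hc
  refine ⟨1 / Real.sqrt (1 + c) - ρ, by linarith, ?_⟩
  intro V _ _ G _ hT hdeg
  have main : sr (Kg c G) ≤ ρ := by
    have hconn := hT.isConnected
    haveI hne : Nonempty V := hconn.nonempty
    obtain ⟨r⟩ := id hne
    apply sr_le_of_row_bound (Kg c G) ?_ (fun v => t ^ (G.dist r v)) (fun v => by positivity)
      hρ0.le ?_
    · intro u v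
      simp only [Kg, Matrix.of_apply]
      apply div_nonneg
      · rw [SimpleGraph.adjMatrix_apply]
        split_ifs <;> norm_num
      · positivity
    · intro u
      have hX : (0 : ℝ) < c + (G.degree u : ℝ) := by positivity
      have hKrow : ∑ v, Kg c G u v * t ^ (G.dist r v)
          = (∑ v ∈ G.neighborFinset u, t ^ (G.dist r v)) / (c + (G.degree u : ℝ)) := by
        have h1 : ∀ v : V, Kg c G u v * t ^ (G.dist r v)
            = G.adjMatrix ℝ u v * t ^ (G.dist r v) / (c + (G.degree u : ℝ)) := by
          intro v
          simp only [Kg, Matrix.of_apply]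
          ring
        rw [Finset.sum_congr rfl (fun v _ => h1 v), ← Finset.sum_div]
        congr 1
        have h2 := SimpleGraph.adjMatrix_mulVec_apply (α := ℝ) (G := G) u
          (fun v => t ^ (G.dist r v))
        simpa [Matrix.mulVec, dotProduct] using h2
      rw [hKrow, div_le_iff₀ hX]
      have hshow : (ρ * (fun v => t ^ G.dist r v) u) * (c + (G.degree u : ℝ))
          = ρ * t ^ (G.dist r u) * (c + (G.degree u : ℝ)) := rfl
      by_cases hur : u = r
      · subst hur
        have hall : ∀ v ∈ G.neighborFinset u, t ^ (G.dist u v) = t := by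
          intro v hv
          rw [SimpleGraph.dist_eq_one_iff_adj.mpr (by simpa using hv : G.Adj u v)]
          exact pow_one t
        show ∑ v ∈ G.neighborFinset u, t ^ G.dist u v ≤ ρ * t ^ (G.dist u u) * (c + (G.degree u : ℝ))
        rw [Finset.sum_congr rfl hall, Finset.sum_const,
          SimpleGraph.card_neighborFinset_eq_degree, SimpleGraph.dist_self, pow_zero, nsmul_eq_mul]
        rcases Nat.eq_zero_or_pos (G.degree u) with h0 | h1
        · simp only [h0, Nat.cast_zero, zero_mul, add_zero]
          positivity
        · have hk1 := hkey (G.degree u) h1 (hdeg u)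
          have h2 : (G.degree u : ℝ) * t ≤ g + ((G.degree u : ℝ) - 1) * t := by
            have : t ≤ g := le_trans ht1 hg1
            nlinarith
          nlinarith
      · obtain ⟨w, hadj, hwdist, hother⟩ := tree_parent hT r hur
        show ∑ v ∈ G.neighborFinset u, t ^ G.dist r v ≤ ρ * t ^ (G.dist r u) * (c + (G.degree u : ℝ))
        have hwmem : w ∈ G.neighborFinset u := by simpa using hadj
        have hd1 : 1 ≤ G.degree u := (G.degree_pos_iff_exists_adj u).mpr ⟨w, hadj⟩
        have hn : G.dist r u = G.dist r w + 1 := hwdist.symm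
        rw [← Finset.add_sum_erase _ _ hwmem]
        have herase : ∀ v ∈ (G.neighborFinset u).erase w,
            t ^ (G.dist r v) = t ^ (G.dist r w + 2) := by
          intro v hv
          obtain ⟨hvw, hvmem⟩ := Finset.mem_erase.mp hv
          rw [hother v (by simpa using hvmem : G.Adj u v) hvw, hn]
        rw [Finset.sum_congr rfl herase, Finset.sum_const, Finset.card_erase_of_mem hwmem,
          SimpleGraph.card_neighborFinset_eq_degree, hn, nsmul_eq_mul]
        have hcast : ((G.degree u - 1 : ℕ) : ℝ) = (G.degree u : ℝ) - 1 := by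
          have := Nat.cast_sub (R := ℝ) hd1
          simpa using this
        rw [hcast]
        have hk1 := hkey (G.degree u) hd1 (hdeg u)
        have hexp : t ^ (G.dist r w) + ((G.degree u : ℝ) - 1) * t ^ (G.dist r w + 2)
            = (g + ((G.degree u : ℝ) - 1) * t) * t ^ (G.dist r w + 1) := by
          linear_combination (-(t ^ (G.dist r w)) : ℝ) * hgt
        rw [hexp]
        calc (g + ((G.degree u : ℝ) - 1) * t) * t ^ (G.dist r w + 1)
            ≤ (ρ * (c + (G.degree u : ℝ))) * t ^ (G.dist r w + 1) :=
              mul_le_mul_of_nonneg_right hk1 (by positivity)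
          _ = ρ * t ^ (G.dist r w + 1) * (c + (G.degree u : ℝ)) := by ring
  linarith
end

section
/- Let c > 0, let T be a finite tree, and let v be a vertex of T. Then for every odd k ≥ 1, (K_T^k)_{vv} = 0, and for every even k ≥ 2, 0 ≤ (K_T^k)_{vv} ≤ (1+c)^{−k/2}. -/
set_option linter.unusedSectionVars false
set_option linter.unusedVariables false
set_option maxHeartbeats 1600000

open SimpleGraph Finset

variable {V : Type} [Fintype V] [DecidableEq V]

lemma exists_spath (G : SimpleGraph V) (hG : G.IsTree) (u r : V) :
    ∃ p : G.Walk u r, p.IsPath ∧ p.length = G.dist u r := by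
  obtain ⟨q, hq⟩ := hG.isConnected.exists_walk_length_eq_dist u r
  refine ⟨q.bypass, q.bypass_isPath, le_antisymm (hq ▸ q.length_bypass_le) ?_⟩
  exact hq ▸ (hq ▸ G.dist_le q.bypass)

/-- If u ≠ w is in the support of a walk q : w → r, then dist u r + 1 ≤ q.length + ... -/
lemma dist_lt_of_mem_support (G : SimpleGraph V) {u w r : V} (hne : u ≠ w)
    (q : G.Walk w r) (hu : u ∈ q.support) : G.dist u r + 1 <= q.length := by
  have h1 := G.dist_le (q.dropUntil u hu)
  have h2 : (q.takeUntil u hu).length + (q.dropUntil u hu).length = q.length := by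
    have := congr_arg SimpleGraph.Walk.length (q.take_spec hu)
    rwa [SimpleGraph.Walk.length_append] at this
  have h3 : (q.takeUntil u hu).length ≠ 0 := by
    intro h0
    exact hne ((q.takeUntil u hu).eq_of_length_eq_zero h0).symm
  omega

/-- Adjacent vertices have levels differing by exactly one (in a tree). -/
lemma level_adj (G : SimpleGraph V) (hG : G.IsTree) (r : V) {u w : V} (huw : G.Adj u w) :
    G.dist w r + 1 = G.dist u r ∨ G.dist u r + 1 = G.dist w r := by
  -- first: |dist u r - dist w r| ≤ 1
  have hd1 : G.dist u w = 1 := (G.dist_eq_one_iff_adj).mpr huw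
  have ht1 : G.dist u r ≤ 1 + G.dist w r := by
    have := hG.isConnected.dist_triangle (u := u) (v := w) (w := r)
    omega
  have ht2 : G.dist w r ≤ 1 + G.dist u r := by
    have := hG.isConnected.dist_triangle (u := w) (v := u) (w := r)
    have hd2 : G.dist w u = 1 := by rwa [G.dist_comm]
    omega
  have hne : G.dist u r ≠ G.dist w r := by
    intro heq
    obtain ⟨q, hqp, hql⟩ := exists_spath G hG w r
    by_cases hmem : u ∈ q.support
    · have := dist_lt_of_mem_support G huw.ne q hmem
      omega
    · -- cons is a path from u to r of length dist w r + 1 ≠ dist u r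
      obtain ⟨p, hpp, hpl⟩ := exists_spath G hG u r
      have hcons : (SimpleGraph.Walk.cons huw q).IsPath := hqp.cons hmem
      have := (hG.existsUnique_path u r).unique hcons hpp
      have hlen := congr_arg SimpleGraph.Walk.length this
      rw [SimpleGraph.Walk.length_cons] at hlen
      omega
  omega
lemma parent_exists_unique (G : SimpleGraph V) (hG : G.IsTree) (r : V) {u : V} (hu : u ≠ r) :
    ∃ w, (G.Adj u w ∧ G.dist w r + 1 = G.dist u r) ∧
      ∀ w', G.Adj u w' → G.dist w' r + 1 = G.dist u r → w' = w := by
  -- existence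
  obtain ⟨p, hpp, hpl⟩ := exists_spath G hG u r
  obtain ⟨w, huw, hwlev⟩ : ∃ w, G.Adj u w ∧ G.dist w r + 1 = G.dist u r := by
    cases p with
    | nil => exact absurd rfl hu
    | @cons _ w _ h q =>
      refine ⟨w, h, ?_⟩
      have h1 : G.dist w r ≤ q.length := G.dist_le q
      have h2 : G.dist u r ≤ 1 + G.dist w r := by
        have := hG.isConnected.dist_triangle (u := u) (v := w) (w := r)
        have : G.dist u w = 1 := (G.dist_eq_one_iff_adj).mpr h
        omega
      rw [SimpleGraph.Walk.length_cons] at hpl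
      omega
  refine ⟨w, ⟨huw, hwlev⟩, ?_⟩
  -- uniqueness
  intro w' huw' hwlev'
  by_contra hne
  obtain ⟨q, hqp, hql⟩ := exists_spath G hG w r
  obtain ⟨q', hqp', hql'⟩ := exists_spath G hG w' r
  have hmem : u ∉ q.support := fun hm => by
    have := dist_lt_of_mem_support G huw.ne q hm; omega
  have hmem' : u ∉ q'.support := fun hm => by
    have := dist_lt_of_mem_support G huw'.ne q' hm; omega
  have hP : (SimpleGraph.Walk.cons huw q).IsPath := hqp.cons hmem
  have hP' : (SimpleGraph.Walk.cons huw' q').IsPath := hqp'.cons hmem'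
  have heq := (hG.existsUnique_path u r).unique hP hP'
  have hsup := congr_arg SimpleGraph.Walk.support heq
  rw [SimpleGraph.Walk.support_cons, SimpleGraph.Walk.support_cons,
    q.support_eq_cons, q'.support_eq_cons] at hsup
  simp only [List.cons.injEq] at hsup
  exact hne (hsup.2.1.symm)
lemma form_bound (c : ℝ) (hc : 0 < c) (G : SimpleGraph V) [DecidableRel G.Adj]
    (r : V) (p : V → V)
    (hp1 : ∀ u, u ≠ r → G.Adj u (p u) ∧ G.dist (p u) r + 1 = G.dist u r)
    (hp2 : ∀ u, u ≠ r → ∀ w', G.Adj u w' → G.dist w' r + 1 = G.dist u r → w' = p u)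
    (hadjlev : ∀ u w, G.Adj u w → G.dist w r + 1 = G.dist u r ∨ G.dist u r + 1 = G.dist w r)
    (x : V → ℝ) :
    |∑ u, ∑ w, (G.adjMatrix ℝ) u w * x u * x w| ≤
      (Real.sqrt (1+c))⁻¹ * ∑ u, (c + (G.degree u : ℝ)) * x u ^ 2 := by
  set s : ℝ := Real.sqrt (1+c) with hs_def
  have hs : 0 < s := Real.sqrt_pos.mpr (by linarith)
  have hs2 : s ^ 2 = 1 + c := Real.sq_sqrt (by linarith)
  set Sp : Finset V := Finset.univ.filter (fun u => u ≠ r) with hSp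
  -- Step A : decomposition of the form as a sum over (child, parent) pairs
  have hsplit : ∀ u w : V, (G.adjMatrix ℝ) u w * x u * x w =
      (if G.Adj u w ∧ G.dist w r + 1 = G.dist u r then x u * x w else 0)
      + (if G.Adj u w ∧ G.dist u r + 1 = G.dist w r then x u * x w else 0) := by
    intro u w
    by_cases h : G.Adj u w
    · rcases hadjlev u w h with h1 | h1
      · have h2 : ¬(G.Adj u w ∧ G.dist u r + 1 = G.dist w r) := by
          rintro ⟨-, h2⟩; omega
        rw [if_pos ⟨h, h1⟩, if_neg h2]
        simp [h]
      · have h2 : ¬(G.Adj u w ∧ G.dist w r + 1 = G.dist u r) := by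
          rintro ⟨-, h2⟩; omega
        rw [if_neg h2, if_pos ⟨h, h1⟩]
        simp [h]
    · simp [h]
  have hinner1 : ∀ u : V, (∑ w, if G.Adj u w ∧ G.dist w r + 1 = G.dist u r
      then x u * x w else 0) = if u ≠ r then x u * x (p u) else 0 := by
    intro u
    by_cases hu : u ≠ r
    · have hiff : ∀ w, (G.Adj u w ∧ G.dist w r + 1 = G.dist u r) ↔ w = p u := by
        intro w
        constructor
        · rintro ⟨h1, h2⟩; exact hp2 u hu w h1 h2
        · rintro rfl; exact hp1 u hu
      simp only [hiff]
      simp [Finset.sum_ite_eq', hu]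
    · push_neg at hu
      subst hu
      have : ∀ w, ¬(G.Adj u w ∧ G.dist w u + 1 = G.dist u u) := by
        rintro w ⟨-, h2⟩
        rw [SimpleGraph.dist_self] at h2
        omega
      simp [this]
  have hS1 : (∑ u, ∑ w, (if G.Adj u w ∧ G.dist w r + 1 = G.dist u r then x u * x w else 0))
      = ∑ u, if u ≠ r then x u * x (p u) else 0 :=
    Finset.sum_congr rfl fun u _ => hinner1 u
  have hS2 : (∑ u, ∑ w, (if G.Adj u w ∧ G.dist u r + 1 = G.dist w r then x u * x w else 0))
      = ∑ w, if w ≠ r then x w * x (p w) else 0 := by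
    rw [Finset.sum_comm]
    refine Finset.sum_congr rfl fun w _ => ?_
    have e1 : (∑ u, (if G.Adj u w ∧ G.dist u r + 1 = G.dist w r then x u * x w else 0))
        = ∑ u, (if G.Adj w u ∧ G.dist u r + 1 = G.dist w r then x w * x u else 0) :=
      Finset.sum_congr rfl fun u _ =>
        if_congr (and_congr_left' (G.adj_comm u w)) (mul_comm _ _) rfl
    rw [e1, hinner1 w]
  have hA : (∑ u, ∑ w, (G.adjMatrix ℝ) u w * x u * x w)
      = ∑ u ∈ Sp, 2 * (x u * x (p u)) := by
    calc ∑ u, ∑ w, (G.adjMatrix ℝ) u w * x u * x w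
        = (∑ u, ∑ w, (if G.Adj u w ∧ G.dist w r + 1 = G.dist u r then x u * x w else 0))
          + ∑ u, ∑ w, (if G.Adj u w ∧ G.dist u r + 1 = G.dist w r then x u * x w else 0) := by
          rw [← Finset.sum_add_distrib]
          refine Finset.sum_congr rfl fun u _ => ?_
          rw [← Finset.sum_add_distrib]
          exact Finset.sum_congr rfl fun w _ => hsplit u w
      _ = (∑ u, if u ≠ r then x u * x (p u) else 0)
          + ∑ w, if w ≠ r then x w * x (p w) else 0 := by rw [hS1, hS2]
      _ = ∑ u, if u ≠ r then 2 * (x u * x (p u)) else 0 := by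
          rw [← Finset.sum_add_distrib]
          refine Finset.sum_congr rfl fun u _ => ?_
          split_ifs <;> ring
      _ = ∑ u ∈ Sp, 2 * (x u * x (p u)) := by
          rw [hSp, Finset.sum_filter]
  have hsi : 0 ≤ s⁻¹ := inv_nonneg.mpr hs.le
  -- AM-GM key
  have key : ∀ a b : ℝ, |2 * (a * b)| ≤ s * a ^ 2 + s⁻¹ * b ^ 2 := by
    intro a b
    have h1 : s * a ^ 2 + s⁻¹ * b ^ 2 - 2 * (a * b) = s⁻¹ * (s * a - b) ^ 2 := by
      field_simp
      ring
    have h2 : s * a ^ 2 + s⁻¹ * b ^ 2 + 2 * (a * b) = s⁻¹ * (s * a + b) ^ 2 := by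
      field_simp
      ring
    have n1 : 0 ≤ s⁻¹ * (s * a - b) ^ 2 := mul_nonneg hsi (sq_nonneg _)
    have n2 : 0 ≤ s⁻¹ * (s * a + b) ^ 2 := mul_nonneg hsi (sq_nonneg _)
    rw [abs_le]
    constructor <;> nlinarith
  -- counting children
  have hcount : ∑ u ∈ Sp, x (p u) ^ 2
      = ∑ w, ((Sp.filter (fun u => p u = w)).card : ℝ) * x w ^ 2 := by
    rw [← Finset.sum_fiberwise_of_maps_to (g := p) (t := Finset.univ)
      (fun u _ => Finset.mem_univ (p u)) (fun u => x (p u) ^ 2)]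
    refine Finset.sum_congr rfl fun w _ => ?_
    have hcg : ∀ u ∈ Sp.filter (fun u => p u = w), x (p u) ^ 2 = x w ^ 2 := fun u hu => by
      rw [(Finset.mem_filter.mp hu).2]
    rw [Finset.sum_congr rfl hcg, Finset.sum_const, nsmul_eq_mul]
  -- cardinality bound
  have hcard : ∀ w : V, ((Sp.filter (fun u => p u = w)).card : ℝ)
      + (if w ≠ r then (1:ℝ) else 0) ≤ (G.degree w : ℝ) := by
    intro w
    by_cases hw : w ≠ r
    · rw [if_pos hw]
      have hmemp : p w ∈ G.neighborFinset w := by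
        rw [SimpleGraph.mem_neighborFinset]
        exact (hp1 w hw).1
      have hsub : Sp.filter (fun u => p u = w) ⊆ (G.neighborFinset w).erase (p w) := by
        intro u hu
        obtain ⟨huSp, hpu⟩ := Finset.mem_filter.mp hu
        have hur : u ≠ r := by
          rw [hSp, Finset.mem_filter] at huSp
          exact huSp.2
        obtain ⟨hadj, hlev⟩ := hp1 u hur
        rw [hpu] at hadj hlev
        refine Finset.mem_erase.mpr ⟨?_, ?_⟩
        · intro hupw
          obtain ⟨-, hlev2⟩ := hp1 w hw
          rw [← hupw] at hlev2
          omega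
        · rw [SimpleGraph.mem_neighborFinset]
          exact hadj.symm
      have h1 : (Sp.filter (fun u => p u = w)).card + 1 ≤ G.degree w := by
        have := Finset.card_le_card hsub
        rw [Finset.card_erase_of_mem hmemp, G.card_neighborFinset_eq_degree] at this
        have hdpos : 1 ≤ G.degree w := by
          rw [← G.card_neighborFinset_eq_degree]
          exact Finset.card_pos.mpr ⟨p w, hmemp⟩
        omega
      exact_mod_cast h1
    · rw [if_neg hw]
      push_neg at hw
      subst hw
      have hsub : Sp.filter (fun u => p u = w) ⊆ G.neighborFinset w := by
        intro u hu
        obtain ⟨huSp, hpu⟩ := Finset.mem_filter.mp hu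
        have hur : u ≠ w := by
          rw [hSp, Finset.mem_filter] at huSp
          exact huSp.2
        obtain ⟨hadj, -⟩ := hp1 u hur
        rw [hpu] at hadj
        rw [SimpleGraph.mem_neighborFinset]
        exact hadj.symm
      have h1 : (Sp.filter (fun u => p u = w)).card ≤ G.degree w := by
        have := Finset.card_le_card hsub
        rwa [G.card_neighborFinset_eq_degree] at this
      simpa using (by exact_mod_cast h1 : ((Sp.filter (fun u => p u = w)).card : ℝ) ≤ G.degree w)
  -- final chain
  have hss : s = s⁻¹ * (1 + c) := by
    rw [← hs2]
    field_simp [pow_two]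
  calc |∑ u, ∑ w, (G.adjMatrix ℝ) u w * x u * x w|
      = |∑ u ∈ Sp, 2 * (x u * x (p u))| := by rw [hA]
    _ ≤ ∑ u ∈ Sp, |2 * (x u * x (p u))| := Finset.abs_sum_le_sum_abs _ _
    _ ≤ ∑ u ∈ Sp, (s * x u ^ 2 + s⁻¹ * x (p u) ^ 2) :=
        Finset.sum_le_sum fun u _ => key (x u) (x (p u))
    _ = s * (∑ u ∈ Sp, x u ^ 2) + s⁻¹ * ∑ u ∈ Sp, x (p u) ^ 2 := by
        rw [Finset.sum_add_distrib, Finset.mul_sum, Finset.mul_sum]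
    _ = s * (∑ u, if u ≠ r then x u ^ 2 else 0)
        + s⁻¹ * ∑ w, ((Sp.filter (fun u => p u = w)).card : ℝ) * x w ^ 2 := by
        rw [hcount, hSp, Finset.sum_filter]
    _ = ∑ u, (s * (if u ≠ r then x u ^ 2 else 0)
        + s⁻¹ * (((Sp.filter (fun u' => p u' = u)).card : ℝ) * x u ^ 2)) := by
        rw [Finset.sum_add_distrib, Finset.mul_sum, Finset.mul_sum]
    _ ≤ ∑ u, s⁻¹ * ((c + (G.degree u : ℝ)) * x u ^ 2) := by
        refine Finset.sum_le_sum fun u _ => ?_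
        have hn : (0:ℝ) ≤ ((Sp.filter (fun u' => p u' = u)).card : ℝ) := Nat.cast_nonneg _
        have hb := hcard u
        by_cases hu : u ≠ r
        · rw [if_pos hu]
          rw [if_pos hu] at hb
          have h1 : (1 + c + ((Sp.filter (fun u' => p u' = u)).card : ℝ)) * x u ^ 2
              ≤ (c + (G.degree u : ℝ)) * x u ^ 2 :=
            mul_le_mul_of_nonneg_right (by linarith) (sq_nonneg _)
          have h2 := mul_le_mul_of_nonneg_left h1 hsi
          calc s * x u ^ 2 + s⁻¹ * (((Sp.filter (fun u' => p u' = u)).card : ℝ) * x u ^ 2)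
              = s⁻¹ * ((1 + c + ((Sp.filter (fun u' => p u' = u)).card : ℝ)) * x u ^ 2) := by
                linear_combination (x u ^ 2) * hss
            _ ≤ s⁻¹ * ((c + (G.degree u : ℝ)) * x u ^ 2) := h2
        · rw [if_neg hu]
          rw [if_neg hu] at hb
          have h1 : (((Sp.filter (fun u' => p u' = u)).card : ℝ)) * x u ^ 2
              ≤ (c + (G.degree u : ℝ)) * x u ^ 2 :=
            mul_le_mul_of_nonneg_right (by linarith) (sq_nonneg _)
          have h2 := mul_le_mul_of_nonneg_left h1 hsi
          calc s * 0 + s⁻¹ * (((Sp.filter (fun u' => p u' = u)).card : ℝ) * x u ^ 2)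
              = s⁻¹ * ((((Sp.filter (fun u' => p u' = u)).card : ℝ)) * x u ^ 2) := by ring
            _ ≤ s⁻¹ * ((c + (G.degree u : ℝ)) * x u ^ 2) := h2
    _ = s⁻¹ * ∑ u, (c + (G.degree u : ℝ)) * x u ^ 2 := by rw [Finset.mul_sum]
lemma hKz_lem (c : ℝ) (hc : 0 < c) (G : SimpleGraph V) [DecidableRel G.Adj] (x : V → ℝ) (u : V) :
    (c + (G.degree u : ℝ)) * (Kg c G).mulVec x u = ∑ w, (G.adjMatrix ℝ) u w * x w := by
  have hD : (c + (G.degree u : ℝ)) ≠ 0 := by positivity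
  simp only [Matrix.mulVec, dotProduct]
  rw [Finset.mul_sum]
  refine Finset.sum_congr rfl fun w _ => ?_
  show (c + (G.degree u : ℝ)) * ((G.adjMatrix ℝ) u w / (c + (G.degree u : ℝ)) * x w) = _
  field_simp

lemma contraction (c : ℝ) (hc : 0 < c) (G : SimpleGraph V) [DecidableRel G.Adj]
    (t : ℝ) (ht : 0 ≤ t)
    (hFB : ∀ x : V → ℝ, |∑ u, ∑ w, (G.adjMatrix ℝ) u w * x u * x w| ≤
      t * ∑ u, (c + (G.degree u : ℝ)) * x u ^ 2)
    (x : V → ℝ) :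
    ∑ u, (c + (G.degree u : ℝ)) * ((Kg c G).mulVec x u) ^ 2 ≤
      t ^ 2 * ∑ u, (c + (G.degree u : ℝ)) * x u ^ 2 := by
  set z : V → ℝ := (Kg c G).mulVec x with hz
  set a : ℝ := ∑ u, (c + (G.degree u : ℝ)) * x u ^ 2 with ha_def
  set b : ℝ := ∑ u, (c + (G.degree u : ℝ)) * z u ^ 2 with hb_def
  have hD : ∀ u : V, (0:ℝ) < c + (G.degree u : ℝ) := fun u => by positivity
  have ha0 : 0 ≤ a := Finset.sum_nonneg fun u _ => mul_nonneg (hD u).le (sq_nonneg _)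
  have hb0 : 0 ≤ b := Finset.sum_nonneg fun u _ => mul_nonneg (hD u).le (sq_nonneg _)
  rcases eq_or_lt_of_le hb0 with hb | hb
  · rw [← hb]; positivity
  have ha : 0 < a := by
    rcases eq_or_lt_of_le ha0 with ha | ha
    swap
    · exact ha
    exfalso
    have hx0 : ∀ u, x u = 0 := by
      intro u
      have h := (Finset.sum_eq_zero_iff_of_nonneg
        (fun u (_ : u ∈ Finset.univ) => mul_nonneg (hD u).le (sq_nonneg (x u)))).mp ha.symm
      have h2 := h u (Finset.mem_univ u)
      have hxu : x u ^ 2 = 0 := by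
        rcases mul_eq_zero.mp h2 with h' | h'
        · exact absurd h' (hD u).ne'
        · exact h'
      exact pow_eq_zero_iff (n := 2) (by norm_num) |>.mp hxu
    have hz0 : ∀ u, z u = 0 := by
      intro u
      rw [hz]
      show ∑ w, Kg c G u w * x w = 0
      exact Finset.sum_eq_zero fun w _ => by rw [hx0 w, mul_zero]
    have hb' : b = 0 := Finset.sum_eq_zero fun u _ => by rw [hz0 u]; ring
    linarith
  -- abbreviation for the quadratic form
  have hKzx : ∀ u, (c + (G.degree u : ℝ)) * z u = ∑ w, (G.adjMatrix ℝ) u w * x w :=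
    fun u => hKz_lem c hc G x u
  have hAsymm : ∀ u w : V, (G.adjMatrix ℝ) u w = (G.adjMatrix ℝ) w u := by
    intro u w
    simp [SimpleGraph.adjMatrix_apply, G.adj_comm]
  -- the two cross sums both equal b
  have hcross1 : (∑ u, ∑ w, (G.adjMatrix ℝ) u w * z u * x w) = b := by
    rw [hb_def]
    refine Finset.sum_congr rfl fun u _ => ?_
    calc ∑ w, (G.adjMatrix ℝ) u w * z u * x w
        = z u * ∑ w, (G.adjMatrix ℝ) u w * x w := by
          rw [Finset.mul_sum]
          exact Finset.sum_congr rfl fun w _ => by ring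
      _ = z u * ((c + (G.degree u : ℝ)) * z u) := by rw [hKzx u]
      _ = (c + (G.degree u : ℝ)) * z u ^ 2 := by ring
  have hcross2 : (∑ u, ∑ w, (G.adjMatrix ℝ) u w * x u * z w) = b := by
    rw [Finset.sum_comm]
    rw [← hcross1]
    refine Finset.sum_congr rfl fun u _ => Finset.sum_congr rfl fun w _ => ?_
    rw [hAsymm w u]
    ring
  -- key identity
  have hkey : ∀ t0 : ℝ,
      (∑ u, ∑ w, (G.adjMatrix ℝ) u w * (x u + t0 * z u) * (x w + t0 * z w))
      - (∑ u, ∑ w, (G.adjMatrix ℝ) u w * (x u - t0 * z u) * (x w - t0 * z w))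
      = 4 * t0 * b := by
    intro t0
    have e1 : (∑ u, ∑ w, (G.adjMatrix ℝ) u w * (x u + t0 * z u) * (x w + t0 * z w))
        - (∑ u, ∑ w, (G.adjMatrix ℝ) u w * (x u - t0 * z u) * (x w - t0 * z w))
        = ∑ u, ∑ w, ((2 * t0) * ((G.adjMatrix ℝ) u w * z u * x w)
            + (2 * t0) * ((G.adjMatrix ℝ) u w * x u * z w)) := by
      rw [← Finset.sum_sub_distrib]
      refine Finset.sum_congr rfl fun u _ => ?_
      rw [← Finset.sum_sub_distrib]
      refine Finset.sum_congr rfl fun w _ => by ring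
    rw [e1]
    have e2 : ∀ u : V, (∑ w, ((2 * t0) * ((G.adjMatrix ℝ) u w * z u * x w)
        + (2 * t0) * ((G.adjMatrix ℝ) u w * x u * z w)))
        = (2 * t0) * (∑ w, (G.adjMatrix ℝ) u w * z u * x w)
          + (2 * t0) * (∑ w, (G.adjMatrix ℝ) u w * x u * z w) := by
      intro u
      rw [Finset.sum_add_distrib, Finset.mul_sum, Finset.mul_sum]
    calc ∑ u, ∑ w, ((2 * t0) * ((G.adjMatrix ℝ) u w * z u * x w)
            + (2 * t0) * ((G.adjMatrix ℝ) u w * x u * z w))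
        = ∑ u, ((2 * t0) * (∑ w, (G.adjMatrix ℝ) u w * z u * x w)
          + (2 * t0) * (∑ w, (G.adjMatrix ℝ) u w * x u * z w)) :=
          Finset.sum_congr rfl fun u _ => e2 u
      _ = (2 * t0) * (∑ u, ∑ w, (G.adjMatrix ℝ) u w * z u * x w)
          + (2 * t0) * (∑ u, ∑ w, (G.adjMatrix ℝ) u w * x u * z w) := by
          rw [Finset.sum_add_distrib, Finset.mul_sum, Finset.mul_sum]
      _ = 4 * t0 * b := by rw [hcross1, hcross2]; ring
  -- the parallelogram-type identity for the weighted norm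
  have hq2 : ∀ t0 : ℝ,
      (∑ u, (c + (G.degree u : ℝ)) * (x u + t0 * z u) ^ 2)
      + (∑ u, (c + (G.degree u : ℝ)) * (x u - t0 * z u) ^ 2)
      = 2 * a + 2 * t0 ^ 2 * b := by
    intro t0
    rw [ha_def, hb_def, ← Finset.sum_add_distrib]
    rw [show (2:ℝ) * (∑ u, (c + (G.degree u : ℝ)) * x u ^ 2)
        + 2 * t0 ^ 2 * (∑ u, (c + (G.degree u : ℝ)) * z u ^ 2)
        = ∑ u, (2 * ((c + (G.degree u : ℝ)) * x u ^ 2)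
          + 2 * t0 ^ 2 * ((c + (G.degree u : ℝ)) * z u ^ 2)) by
      rw [Finset.sum_add_distrib, Finset.mul_sum, Finset.mul_sum]]
    exact Finset.sum_congr rfl fun u _ => by ring
  -- put it together with the right choice of t0
  set t0 : ℝ := Real.sqrt a / Real.sqrt b with ht0_def
  have hsa : 0 < Real.sqrt a := Real.sqrt_pos.mpr ha
  have hsb : 0 < Real.sqrt b := Real.sqrt_pos.mpr hb
  have ht0 : 0 < t0 := div_pos hsa hsb
  have ht0sq : t0 ^ 2 = a / b := by
    rw [ht0_def, div_pow, Real.sq_sqrt ha0, Real.sq_sqrt hb0]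
  have hineq : 4 * t0 * b ≤ t * (2 * a + 2 * t0 ^ 2 * b) := by
    rw [← hkey t0, ← hq2 t0]
    have h1 := hFB (fun u => x u + t0 * z u)
    have h2 := hFB (fun u => x u - t0 * z u)
    rw [abs_le] at h1 h2
    rw [mul_add]
    linarith [h1.2, h2.1]
  have hineq2 : 4 * t0 * b ≤ 4 * t * a := by
    have : t0 ^ 2 * b = a := by
      rw [ht0sq]
      field_simp
    calc 4 * t0 * b ≤ t * (2 * a + 2 * t0 ^ 2 * b) := hineq
      _ = 4 * t * a := by linear_combination 2 * t * this
  -- t0 * b = sqrt a * sqrt b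
  have ht0b : t0 * b = Real.sqrt a * Real.sqrt b := by
    rw [ht0_def]
    field_simp
    linear_combination (-1) * Real.mul_self_sqrt hb0
  have hfin : Real.sqrt a * Real.sqrt b ≤ t * a := by linarith [hineq2, ht0b.symm.le, ht0b.le]
  -- divide by sqrt a and square
  have hsqb : Real.sqrt b ≤ t * Real.sqrt a := by
    have haa := Real.mul_self_sqrt ha0
    nlinarith [hfin, hsa, haa]
  nlinarith [hsqb, Real.sqrt_nonneg b, Real.sq_sqrt ha0, Real.sq_sqrt hb0, mul_nonneg ht (Real.sqrt_nonneg a)]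

lemma selfadj (c : ℝ) (hc : 0 < c) (G : SimpleGraph V) [DecidableRel G.Adj] (x y : V → ℝ) :
    ∑ u, (c + (G.degree u : ℝ)) * (Kg c G).mulVec x u * y u
      = ∑ u, (c + (G.degree u : ℝ)) * x u * (Kg c G).mulVec y u := by
  have hAsymm : ∀ u w : V, (G.adjMatrix ℝ) u w = (G.adjMatrix ℝ) w u := by
    intro u w
    simp [SimpleGraph.adjMatrix_apply, G.adj_comm]
  calc ∑ u, (c + (G.degree u : ℝ)) * (Kg c G).mulVec x u * y u
      = ∑ u, ∑ w, (G.adjMatrix ℝ) u w * x w * y u := by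
        refine Finset.sum_congr rfl fun u _ => ?_
        rw [mul_assoc, mul_comm ((Kg c G).mulVec x u) (y u), ← mul_assoc]
        rw [mul_comm ((c + (G.degree u : ℝ))) (y u), mul_assoc, hKz_lem c hc G x u,
          Finset.mul_sum]
        exact Finset.sum_congr rfl fun w _ => by ring
    _ = ∑ u, ∑ w, (G.adjMatrix ℝ) w u * x u * y w := Finset.sum_comm
    _ = ∑ u, (c + (G.degree u : ℝ)) * x u * (Kg c G).mulVec y u := by
        refine Finset.sum_congr rfl fun u _ => ?_
        calc ∑ w, (G.adjMatrix ℝ) w u * x u * y w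
            = x u * ∑ w, (G.adjMatrix ℝ) u w * y w := by
              rw [Finset.mul_sum]
              exact Finset.sum_congr rfl fun w _ => by rw [hAsymm w u]; ring
          _ = x u * ((c + (G.degree u : ℝ)) * (Kg c G).mulVec y u) := by
              rw [hKz_lem c hc G y u]
          _ = (c + (G.degree u : ℝ)) * x u * (Kg c G).mulVec y u := by ring

lemma pow_selfadj (c : ℝ) (hc : 0 < c) (G : SimpleGraph V) [DecidableRel G.Adj]
    (m : ℕ) (x y : V → ℝ) :
    ∑ u, (c + (G.degree u : ℝ)) * ((Kg c G) ^ m).mulVec x u * y u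
      = ∑ u, (c + (G.degree u : ℝ)) * x u * ((Kg c G) ^ m).mulVec y u := by
  induction m generalizing x y with
  | zero => simp [Matrix.one_mulVec]
  | succ m ih =>
    have hx : ((Kg c G) ^ (m+1)).mulVec x = ((Kg c G) ^ m).mulVec ((Kg c G).mulVec x) := by
      rw [pow_succ, Matrix.mulVec_mulVec]
    have hy : ((Kg c G) ^ (m+1)).mulVec y = (Kg c G).mulVec (((Kg c G) ^ m).mulVec y) := by
      rw [pow_succ', Matrix.mulVec_mulVec]
    rw [hx, hy]
    rw [ih ((Kg c G).mulVec x) y]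
    exact selfadj c hc G x (((Kg c G) ^ m).mulVec y)

lemma parity_zero (c : ℝ) (G : SimpleGraph V) [DecidableRel G.Adj] (hG : G.IsTree) (v : V)
    (hadjlev : ∀ u w, G.Adj u w →
      G.dist w v + 1 = G.dist u v ∨ G.dist u v + 1 = G.dist w v) :
    ∀ k u w, (G.dist u v + G.dist w v + k) % 2 = 1 → ((Kg c G) ^ k) u w = 0 := by
  intro k
  induction k with
  | zero =>
    intro u w hp
    have : u ≠ w := by
      rintro rfl
      omega
    simp [Matrix.one_apply, this]
  | succ k ih =>
    intro u w hp
    rw [pow_succ, Matrix.mul_apply]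
    refine Finset.sum_eq_zero fun y _ => ?_
    by_cases h : G.Adj y w
    · have hl := hadjlev y w h
      have : ((Kg c G) ^ k) u y = 0 := by
        apply ih
        omega
      rw [this, zero_mul]
    · have : Kg c G y w = 0 := by
        simp [Kg, SimpleGraph.adjMatrix_apply, h]
      rw [this, mul_zero]

/-- for a finite tree T, vertex v and c > 0: (K_T^k)_{vv} = 0 for
odd k, and 0 ≤ (K_T^{2m})_{vv} ≤ (1+c)^{-m} for even k = 2m ≥ 2. -/
theorem tree_diagonal_power_bounds
    {V : Type} [Fintype V] [DecidableEq V] (c : ℝ) (hc : 0 < c)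
    (G : SimpleGraph V) [DecidableRel G.Adj] (hG : G.IsTree) (v : V) :
    (∀ k : ℕ, Odd k → ((Kg c G) ^ k) v v = 0) ∧
    (∀ m : ℕ, 1 ≤ m →
      0 ≤ ((Kg c G) ^ (2 * m)) v v ∧ ((Kg c G) ^ (2 * m)) v v ≤ ((1 + c) ^ m)⁻¹) := by
  have hadjlev : ∀ u w, G.Adj u w →
      G.dist w v + 1 = G.dist u v ∨ G.dist u v + 1 = G.dist w v :=
    fun u w h => level_adj G hG v h
  constructor
  · -- odd powers vanish on the diagonal
    intro k hk
    apply parity_zero c G hG v hadjlev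
    rw [SimpleGraph.dist_self]
    rw [Nat.odd_iff] at hk
    omega
  · -- even powers
    intro m hm
    have hpeu : ∀ u, u ≠ v → ∃ w, (G.Adj u w ∧ G.dist w v + 1 = G.dist u v) ∧
        ∀ w', G.Adj u w' → G.dist w' v + 1 = G.dist u v → w' = w :=
      fun u hu => parent_exists_unique G hG v hu
    choose! p hp using hpeu
    set ρ : ℝ := (Real.sqrt (1 + c))⁻¹ with hρ_def
    have hsq : Real.sqrt (1 + c) ^ 2 = 1 + c := Real.sq_sqrt (by linarith)
    have hspos : 0 < Real.sqrt (1 + c) := Real.sqrt_pos.mpr (by linarith)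
    have hρ0 : 0 ≤ ρ := inv_nonneg.mpr hspos.le
    have hρ2 : ρ ^ 2 = (1 + c)⁻¹ := by
      rw [hρ_def, inv_pow, hsq]
    have hFB : ∀ x : V → ℝ, |∑ u, ∑ w, (G.adjMatrix ℝ) u w * x u * x w| ≤
        ρ * ∑ u, (c + (G.degree u : ℝ)) * x u ^ 2 :=
      fun x => form_bound c hc G v p (fun u hu => (hp u hu).1)
        (fun u hu w' h1 h2 => (hp u hu).2 w' h1 h2) hadjlev x
    have hcontr := contraction c hc G ρ hρ0 hFB
    have hD : ∀ u : V, (0:ℝ) < c + (G.degree u : ℝ) := fun u => by positivity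
    -- iterate the contraction
    have hiter : ∀ (n : ℕ) (x : V → ℝ),
        ∑ u, (c + (G.degree u : ℝ)) * (((Kg c G) ^ n).mulVec x u) ^ 2
          ≤ (ρ ^ 2) ^ n * ∑ u, (c + (G.degree u : ℝ)) * x u ^ 2 := by
      intro n
      induction n with
      | zero => intro x; simp [Matrix.one_mulVec]
      | succ n ih =>
        intro x
        have hsplit : ((Kg c G) ^ (n+1)).mulVec x
            = ((Kg c G) ^ n).mulVec ((Kg c G).mulVec x) := by
          rw [pow_succ, Matrix.mulVec_mulVec]
        rw [hsplit]
        calc ∑ u, (c + (G.degree u : ℝ)) * (((Kg c G) ^ n).mulVec ((Kg c G).mulVec x) u) ^ 2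
            ≤ (ρ ^ 2) ^ n * ∑ u, (c + (G.degree u : ℝ)) * ((Kg c G).mulVec x u) ^ 2 :=
              ih ((Kg c G).mulVec x)
          _ ≤ (ρ ^ 2) ^ n * (ρ ^ 2 * ∑ u, (c + (G.degree u : ℝ)) * x u ^ 2) :=
              mul_le_mul_of_nonneg_left (hcontr x) (pow_nonneg (sq_nonneg ρ) n)
          _ = (ρ ^ 2) ^ (n+1) * ∑ u, (c + (G.degree u : ℝ)) * x u ^ 2 := by ring
    -- the indicator vector at v
    set e : V → ℝ := fun w => if w = v then (1:ℝ) else 0 with he_def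
    have he : ∀ (M : Matrix V V ℝ), M.mulVec e = fun u => M u v := by
      intro M
      funext u
      simp only [Matrix.mulVec, dotProduct, he_def]
      simp [mul_ite, mul_one, mul_zero, Finset.sum_ite_eq']
    have hdiag : ∀ (M : Matrix V V ℝ),
        ∑ u, (c + (G.degree u : ℝ)) * M.mulVec e u * e u
          = (c + (G.degree v : ℝ)) * M v v := by
      intro M
      simp only [he M]
      simp only [he_def]
      have : ∀ u : V, (c + (G.degree u : ℝ)) * M u v * (if u = v then (1:ℝ) else 0)
          = if u = v then (c + (G.degree u : ℝ)) * M u v else 0 := by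
        intro u
        split_ifs <;> ring
      rw [Finset.sum_congr rfl fun u _ => this u]
      simp [Finset.sum_ite_eq']
    have hqe : ∑ u, (c + (G.degree u : ℝ)) * e u ^ 2 = c + (G.degree v : ℝ) := by
      have : ∀ u : V, (c + (G.degree u : ℝ)) * e u ^ 2
          = if u = v then c + (G.degree u : ℝ) else 0 := by
        intro u
        simp only [he_def]
        split_ifs <;> ring
      rw [Finset.sum_congr rfl fun u _ => this u]
      simp [Finset.sum_ite_eq']
    -- the key identity
    have hsplit2m : ((Kg c G) ^ (2*m)).mulVec e
        = ((Kg c G) ^ m).mulVec (((Kg c G) ^ m).mulVec e) := by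
      rw [Matrix.mulVec_mulVec, ← pow_add]
      congr 1
      ring
    have hkey : (c + (G.degree v : ℝ)) * ((Kg c G) ^ (2*m)) v v
        = ∑ u, (c + (G.degree u : ℝ)) * (((Kg c G) ^ m).mulVec e u) ^ 2 := by
      calc (c + (G.degree v : ℝ)) * ((Kg c G) ^ (2*m)) v v
          = ∑ u, (c + (G.degree u : ℝ)) * ((Kg c G) ^ (2*m)).mulVec e u * e u :=
            (hdiag ((Kg c G) ^ (2*m))).symm
        _ = ∑ u, (c + (G.degree u : ℝ))
            * ((Kg c G) ^ m).mulVec (((Kg c G) ^ m).mulVec e) u * e u := by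
            rw [hsplit2m]
        _ = ∑ u, (c + (G.degree u : ℝ)) * (((Kg c G) ^ m).mulVec e) u
            * (((Kg c G) ^ m).mulVec e) u :=
            pow_selfadj c hc G m (((Kg c G) ^ m).mulVec e) e
        _ = ∑ u, (c + (G.degree u : ℝ)) * (((Kg c G) ^ m).mulVec e u) ^ 2 := by
            refine Finset.sum_congr rfl fun u _ => by ring
    have hnn : 0 ≤ ∑ u, (c + (G.degree u : ℝ)) * (((Kg c G) ^ m).mulVec e u) ^ 2 :=
      Finset.sum_nonneg fun u _ => mul_nonneg (hD u).le (sq_nonneg _)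
    have hub : ∑ u, (c + (G.degree u : ℝ)) * (((Kg c G) ^ m).mulVec e u) ^ 2
        ≤ ((1 + c) ^ m)⁻¹ * (c + (G.degree v : ℝ)) := by
      calc ∑ u, (c + (G.degree u : ℝ)) * (((Kg c G) ^ m).mulVec e u) ^ 2
          ≤ (ρ ^ 2) ^ m * ∑ u, (c + (G.degree u : ℝ)) * e u ^ 2 := hiter m e
        _ = ((1 + c) ^ m)⁻¹ * (c + (G.degree v : ℝ)) := by
            rw [hqe, hρ2, inv_pow]
    have hDv := hD v
    constructor
    · have h0 : 0 ≤ (c + (G.degree v : ℝ)) * ((Kg c G) ^ (2*m)) v v := hkey ▸ hnn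
      exact nonneg_of_mul_nonneg_right h0 hDv
    · have h1 : (c + (G.degree v : ℝ)) * ((Kg c G) ^ (2*m)) v v
          ≤ (c + (G.degree v : ℝ)) * ((1 + c) ^ m)⁻¹ := by
        rw [hkey]
        calc ∑ u, (c + (G.degree u : ℝ)) * (((Kg c G) ^ m).mulVec e u) ^ 2
            ≤ ((1 + c) ^ m)⁻¹ * (c + (G.degree v : ℝ)) := hub
          _ = (c + (G.degree v : ℝ)) * ((1 + c) ^ m)⁻¹ := by ring
      exact (mul_le_mul_iff_right₀ hDv).mp h1
end
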